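/- arXiv:2311.08917 — 6 statements merged into one kernel-verified Lean document; each statement's English description precedes it below -/
import Mathlib

section
/- Let m, n be positive integers, let u ∈ S_m and v ∈ S_n be permutations, set I = Des(u) ⊆ [m−1] and J = Des(v) ⊆ [n−1], and let A ⊆ [m+n] with |A| = n. Then the descent set of the shifted shuffle satisfies Des(u ⧢_A v[m]) = e(A) ⊔ ((I #_A J) ∖ ē(A)); that is, Des(u ⧢_A v[m]) = I ⧢_A J. -/
namespace QSymPaper

attribute [local instance 0] Classical.propDecidable

noncomputable section

/-- A composition condition: all parts are positive. -/
def IsComp (α : List ℕ) : Prop := ∀ a ∈ α, 0 < a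

/-- `set(α)`: the set of proper partial sums of `α`. -/
def setComp (α : List ℕ) : Finset ℕ :=
  (Finset.range (α.length - 1)).image (fun j => (α.take (j + 1)).sum)

/-- `comp(S)` for `S ⊆ [n−1]`: the composition of `n` whose set of partial sums is `S`. -/
def compOf (n : ℕ) (S : Finset ℕ) : List ℕ :=
  if n = 0 then []
  else
    let l := S.sort (· ≤ ·) ++ [n]
    List.zipWith (fun a b => a - b) l (0 :: l)

/-- Monomial quasisymmetric function `M_α`, in the variables of the sub-alphabet `P`. -/
def Mqs (σ : Type) [LinearOrder σ] (F : Type) [CommRing F] (P : σ → Prop) (α : List ℕ) :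
    MvPowerSeries σ F :=
  fun (d : σ →₀ ℕ) => if (∀ i ∈ d.support, P i) ∧ (d.support.sort (· ≤ ·)).map (fun i => d i) = α
    then 1 else 0

/-- Fundamental quasisymmetric function `L_{comp(S)}` (for `S ⊆ [n−1]`). -/
def Lqs (σ : Type) [LinearOrder σ] (F : Type) [CommRing F] (P : σ → Prop)
    (n : ℕ) (S : Finset ℕ) : MvPowerSeries σ F :=
  ∑ T ∈ (Finset.Icc 1 (n - 1)).powerset.filter (fun T => S ⊆ T), Mqs σ F P (compOf n T)

/-- The weight `wt_I(i) = |[1,i−1] ∩ I| + 1`. -/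
def wt (I : Finset ℕ) (i : ℕ) : ℕ := (Finset.Icc 1 (i - 1) ∩ I).card + 1

/-- `A∁ = [N] ∖ A`. -/
def coSet (N : ℕ) (A : Finset ℕ) : Finset ℕ := Finset.Icc 1 N \ A

/-- `e(A)`: right endpoints of the maximal intervals of `A`, except `N`. -/
def eSet (N : ℕ) (A : Finset ℕ) : Finset ℕ := (A.filter (fun b => b + 1 ∉ A)).erase N

/-- `ē(A) = e(A) ∪ e(A∁)`. -/
def ebar (N : ℕ) (A : Finset ℕ) : Finset ℕ := eSet N A ∪ eSet N (coSet N A)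

/-- `T_S`: the image of `T ⊆ [|S|]` under the increasing enumeration of `S` (1-based). -/
def embedIn (S T : Finset ℕ) : Finset ℕ :=
  T.image (fun t => (S.sort (· ≤ ·)).getD (t - 1) 0)

/-- `std_S(T)`: ranks within `S` of the elements of `T ⊆ S`. -/
def stdSet (S T : Finset ℕ) : Finset ℕ :=
  T.image (fun t => (S.filter (· ≤ t)).card)

/-- `I #_A J := I_{A∁} ⊔ J_A`. -/
def hashAJ (N : ℕ) (A I J : Finset ℕ) : Finset ℕ :=
  embedIn (coSet N A) I ∪ embedIn A J

/-- `I ⧢_A J := e(A) ⊔ ((I #_A J) ∖ ē(A))`. -/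
def shSet (N : ℕ) (A I J : Finset ℕ) : Finset ℕ :=
  eSet N A ∪ (hashAJ N A I J \ ebar N A)

/-- The `i`-th entry (1-based) of the word `w`. -/
def wordEntry (w : List ℕ) (i : ℕ) : ℕ := w.getD (i - 1) 0

/-- The descent set of the word `w`. -/
def wordDes (w : List ℕ) : Finset ℕ :=
  (Finset.Icc 1 (w.length - 1)).filter (fun i => wordEntry w (i + 1) < wordEntry w i)

/-- `u ⧢_A v`: the word of length `N` whose subword in positions `A` is `v`
and whose subword in the complementary positions is `u`. -/
def shWord (N : ℕ) (u v : List ℕ) (A : Finset ℕ) : List ℕ :=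
  (List.range N).map (fun p0 =>
    if p0 + 1 ∈ A then v.getD ((A.filter (· ≤ p0 + 1)).card - 1) 0
    else u.getD (((coSet N A).filter (· ≤ p0 + 1)).card - 1) 0)

/-- `v[m]`: the `m`-shifted word. -/
def shiftWord (m : ℕ) (v : List ℕ) : List ℕ := v.map (· + m)

/-- `u` is (the word of) a permutation in `S_m`. -/
def IsPermWord (m : ℕ) (u : List ℕ) : Prop := u.Perm (List.range' 1 m)

/-- `z_A`. -/
def zA (N : ℕ) (A : Finset ℕ) : ℕ :=
  if N ∈ A then WithBot.unbotD 0 (coSet N A).max else WithBot.unbotD 0 A.max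

/-- `J̃_A`. -/
def Jtilde (N : ℕ) (A J : Finset ℕ) : Finset ℕ :=
  if N ∈ A then insert N (embedIn A J) else insert (zA N A) (embedIn A J)

/-- `𝒜_{α,β}` (as a set of subsets of `[m+n]`, where `I = set α`, `J = set β`). -/
def calA (m n : ℕ) (I J : Finset ℕ) : Finset (Finset ℕ) :=
  ((Finset.Icc 1 (m + n)).powersetCard n).filter
    (fun A => ebar (m + n) A \ {zA (m + n) A} ⊆ hashAJ (m + n) A I J)

/-- `Ψ(A) = std_{(I #_A J) ⊔ {z_A} ⊔ {m+n}}(J̃_A)`. -/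
def Psi (m n : ℕ) (I J : Finset ℕ) (A : Finset ℕ) : Finset ℕ :=
  stdSet (insert (m + n) (insert (zA (m + n) A) (hashAJ (m + n) A I J)))
    (Jtilde (m + n) A J)

/-- `α ⧢_D β`: the shuffle of the compositions `α` and `β` whose `β`-entries occupy `D`. -/
def shComp (α β : List ℕ) (D : Finset ℕ) : List ℕ :=
  shWord (α.length + β.length) α β D

/-- `Σ(α,β,D,i)`: the sum of the first `d_i − 1` entries of `α ⧢_D β`. -/
def psum (α β : List ℕ) (D : Finset ℕ) (i : ℕ) : ℕ :=
  ((shComp α β D).take ((D.sort (· ≤ ·)).getD (i - 1) 0 - 1)).sum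

/-- `Φ(D)`. -/
def Phi (α β : List ℕ) (D : Finset ℕ) : Finset ℕ :=
  (Finset.Icc 1 β.length).biUnion (fun i =>
    Finset.Icc (psum α β D i + 1) (psum α β D i + β.getD (i - 1) 0))

/-- The index set for two-way overlapping shuffles of `α` and `β`: triples `(D, S₁, S₂)`
where `D` records the shuffle, `S₁` the positions of `+₁` (an `α`-entry immediately
followed by a `β`-entry) and `S₂` the positions of `+₂`. -/
def twoWayIdx (α β : List ℕ) : Finset (Finset ℕ × Finset ℕ × Finset ℕ) :=
  (((Finset.Icc 1 (α.length + β.length)).powersetCard β.length) ×ˢ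
    ((Finset.Icc 1 (α.length + β.length - 1)).powerset ×ˢ
      (Finset.Icc 1 (α.length + β.length - 1)).powerset)).filter
    (fun x => (∀ p ∈ x.2.1, p ∉ x.1 ∧ p + 1 ∈ x.1) ∧ (∀ p ∈ x.2.2, p ∈ x.1 ∧ p + 1 ∉ x.1))

/-- `γ⁺`: the composition obtained from the two-way overlapping shuffle `(D,S₁,S₂)`
by carrying out the marked additions. -/
def plusComp (α β : List ℕ) (D S₁ S₂ : Finset ℕ) : List ℕ :=
  compOf (α.sum + β.sum)
    (((Finset.Icc 1 (α.length + β.length - 1)) \ (S₁ ∪ S₂)).image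
      (fun p => ((shComp α β D).take p).sum))

/-- `D_α(q,t)`. -/
def Dqt (σ : Type) [LinearOrder σ] (F : Type) [Field F] (P : σ → Prop) (q t : F)
    (α : List ℕ) : MvPowerSeries σ F :=
  if α = [] then 1
  else ∑ T ∈ (setComp α).powerset,
    (q ^ ((T.card + 1 : ℤ) - (α.sum : ℤ)) * (-t) ^ (α.length - (T.card + 1))) •
      Mqs σ F P (compOf α.sum T)

/-- Enriched monomial quasisymmetric function with generic weight `c`
(`c = 2` gives `η_α`, `c = q+1` gives `η_α^{(q)}`). -/
def etaQ (σ : Type) [LinearOrder σ] (F : Type) [CommRing F] (P : σ → Prop) (c : F)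
    (α : List ℕ) : MvPowerSeries σ F :=
  if α = [] then 1
  else ∑ T ∈ (setComp α).powerset, (c ^ (T.card + 1)) • Mqs σ F P (compOf α.sum T)

/-- `K_{comp(J)}(ν)` (for `J ⊆ [n−1]`, `n ≥ 1`). -/
def Kset (σ : Type) [LinearOrder σ] (P : σ → Prop) (ν : ℤ) (n : ℕ) (J : Finset ℕ) :
    MvPowerSeries σ ℂ :=
  ((ν : ℂ) ^ (-((n : ℤ) - 1))) •
    ∑ I ∈ (Finset.Icc 1 (n - 1)).powerset,
      ((-1 : ℂ) ^ ((J \ I).card) *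
        ((ν : ℂ) - 1) ^ ((Finset.Icc 1 (n - 1) \ (I ∪ J)).card)) • Lqs σ ℂ P n I

/-- `K_α(ν)` for a composition `α`. -/
def Kcomp (σ : Type) [LinearOrder σ] (P : σ → Prop) (ν : ℤ) (α : List ℕ) :
    MvPowerSeries σ ℂ :=
  if α = [] then 1 else Kset σ P ν α.sum (setComp α)

/-- The quasisymmetric Hall–Littlewood function `G_I(q)` (for `I ⊆ [n−1]`),
with `q = RatFunc.X`. -/
def Gq (σ : Type) [LinearOrder σ] (P : σ → Prop) (n : ℕ) (I : Finset ℕ) :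
    MvPowerSeries σ (RatFunc ℂ) :=
  ∑ J ∈ (Finset.Icc 1 (n - 1)).powerset.filter (fun J => I ⊆ J),
    ((-1 : RatFunc ℂ) ^ ((J \ I).card) * RatFunc.X ^ (∑ i ∈ J \ I, wt I i)) •
      Lqs σ (RatFunc ℂ) P n J

/-- `G_γ(q)` for a composition `γ`. -/
def Gcomp (σ : Type) [LinearOrder σ] (P : σ → Prop) (γ : List ℕ) :
    MvPowerSeries σ (RatFunc ℂ) :=
  if γ = [] then 1 else Gq σ P γ.sum (setComp γ)

/-- The `q`-monomial quasisymmetric function `M_{comp(I)}(q)` (for `I ⊆ [n−1]`). -/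
def MqF (σ : Type) [LinearOrder σ] (P : σ → Prop) (n : ℕ) (I : Finset ℕ) :
    MvPowerSeries σ (RatFunc ℂ) :=
  ∑ T ∈ (Finset.Icc 1 (n - 1)).powerset.filter (fun T => I ⊆ T),
    ((-RatFunc.X : RatFunc ℂ) ^ (T.card - I.card)) • Lqs σ (RatFunc ℂ) P n T

/-- `M_γ(q)` for a composition `γ`. -/
def Mqcomp (σ : Type) [LinearOrder σ] (P : σ → Prop) (γ : List ℕ) :
    MvPowerSeries σ (RatFunc ℂ) :=
  if γ = [] then 1 else MqF σ P γ.sum (setComp γ)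

/-- `P_w`: positions of the nonzero entries of `w`. -/
def Pset (w : List ℕ) : Finset ℕ :=
  (Finset.Icc 1 w.length).filter (fun i => wordEntry w i ≠ 0)

/-- Standardized descent set `sDes(w)`. -/
def sDes (w : List ℕ) : Finset ℕ := (stdSet (Pset w) (wordDes w)).erase (Pset w).card

def wLe (m : ℕ) (w : List ℕ) : List ℕ := w.filter (fun a => decide (a ≤ m))
def wGt (m : ℕ) (w : List ℕ) : List ℕ := (w.filter (fun a => decide (m < a))).map (· - m)
def wLe0 (m : ℕ) (w : List ℕ) : List ℕ := w.map (fun a => if a ≤ m then a else 0)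
def wGt0 (m : ℕ) (w : List ℕ) : List ℕ := w.map (fun a => if a ≤ m then 0 else a)

/-- 1-based position of `a` in the list `l`. -/
def posIn (l : List ℕ) (a : ℕ) : ℕ := l.idxOf a + 1

/-- The standardized `q`-weight `sw^w_m`. -/
def swq (m : ℕ) (w : List ℕ) (i : ℕ) : RatFunc ℂ :=
  if wordEntry w i ≤ m ∧ wordEntry w (i + 1) ≤ m then
    RatFunc.X ^ wt (wordDes (wLe m w)) (posIn (wLe m w) (wordEntry w i))
  else if m < wordEntry w i ∧ m < wordEntry w (i + 1) then
    RatFunc.X ^ wt (wordDes (wGt m w)) (posIn (wGt m w) (wordEntry w i - m))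
  else 0

/-- `c_q(u,v) = (1−q^u)(1−q^{u−1})⋯(1−q^{u−v+1})`. -/
def cq (u v : ℕ) : RatFunc ℂ := ∏ j ∈ Finset.range v, (1 - RatFunc.X ^ (u - j))

/-- The `t`-th smallest element of `I` (1-based). -/
def nthElt (I : Finset ℕ) (t : ℕ) : ℕ := (I.sort (· ≤ ·)).getD (t - 1) 0

/-- `Bre(I,J)_t`. -/
def bre (I J : Finset ℕ) (t : ℕ) : ℕ :=
  if t = 0 then 0 else (J.filter (· ≤ nthElt I t)).card

/-- `s(I,J)`. -/
def sIJ (I J : Finset ℕ) : ℕ :=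
  ∑ t ∈ Finset.Icc 1 I.card, t * (bre I J t - bre I J (t - 1) - 1)

/-- `Bre(I,J)` as a set. -/
def breSet (I J : Finset ℕ) : Finset ℕ := (Finset.Icc 1 I.card).image (bre I J)

/-- `g(I,J)`. -/
def gIJ (I J : Finset ℕ) : ℕ := ∑ k ∈ Finset.Icc 1 J.card \ breSet I J, k

/-- Near-concatenation `α ⊙ β`. -/
def nearConcat : List ℕ → List ℕ → List ℕ
  | [], β => β
  | α, [] => α
  | α, b :: βs => α.dropLast ++ (α.getLast?.getD 0 + b) :: βs

/-- The field `ℂ(q,t)`. -/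
abbrev Fqt : Type := FractionRing (MvPolynomial (Fin 2) ℂ)

/-- The variable `q` of `ℂ(q,t)`. -/
def qv : Fqt := algebraMap (MvPolynomial (Fin 2) ℂ) Fqt (MvPolynomial.X 0)

/-- The variable `t` of `ℂ(q,t)`. -/
def tv : Fqt := algebraMap (MvPolynomial (Fin 2) ℂ) Fqt (MvPolynomial.X 1)

/-- The combined two-alphabet variable set, every `x`-variable smaller
than every `y`-variable. -/
abbrev Sig2 : Type := ℕ ⊕ₗ ℕ

/-- The full alphabet. -/
def PTot : Sig2 → Prop := fun _ => True

/-- The first (`x`) alphabet. -/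
def PLft : Sig2 → Prop := fun s => (ofLex s).isLeft = true

/-- The second (`y`) alphabet. -/
def PRgt : Sig2 → Prop := fun s => (ofLex s).isRight = true


def rk (S : Finset ℕ) (i : ℕ) : ℕ := (S.filter (· ≤ i)).card

lemma rank_emb (S : Finset ℕ) (j : Fin S.card) :
    rk S (S.orderEmbOfFin rfl j) = j + 1 := by
  have h : S.filter (· ≤ S.orderEmbOfFin rfl j)
      = Finset.image (fun i : Fin S.card => S.orderEmbOfFin rfl i) (Finset.Iic j) := by
    ext x
    simp only [Finset.mem_filter, Finset.mem_image, Finset.mem_Iic]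
    constructor
    · rintro ⟨hxS, hxle⟩
      have : x ∈ Set.range (S.orderEmbOfFin rfl) := by
        rw [Finset.range_orderEmbOfFin]; exact hxS
      obtain ⟨i, rfl⟩ := this
      exact ⟨i, (OrderEmbedding.le_iff_le _).1 hxle, rfl⟩
    · rintro ⟨i, hij, rfl⟩
      exact ⟨Finset.orderEmbOfFin_mem _ _ _, (OrderEmbedding.le_iff_le _).2 hij⟩
  rw [rk, h, Finset.card_image_of_injective _ (S.orderEmbOfFin rfl).injective, Fin.card_Iic]

lemma sort_getD_emb (S : Finset ℕ) {k : ℕ} (hk : k < S.card) :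
    (S.sort (· ≤ ·)).getD k 0 = S.orderEmbOfFin rfl ⟨k, hk⟩ := by
  rw [List.getD_eq_getElem _ _ (by simpa [Finset.length_sort] using hk),
    Finset.orderEmbOfFin_apply]
  rfl

lemma rank_mem {S : Finset ℕ} {i : ℕ} (hi : i ∈ S) :
    1 ≤ rk S i ∧ rk S i ≤ S.card ∧
      (S.sort (· ≤ ·)).getD (rk S i - 1) 0 = i := by
  have hx : i ∈ Set.range (S.orderEmbOfFin rfl) := by
    rw [Finset.range_orderEmbOfFin]; exact hi
  obtain ⟨j, rfl⟩ := hx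
  have hr := rank_emb S j
  refine ⟨by omega, by rw [hr]; omega, ?_⟩
  rw [hr, Nat.add_sub_cancel, sort_getD_emb S j.2]

lemma rk_succ {S : Finset ℕ} {i : ℕ} (hi : i ∈ S) (hi1 : i + 1 ∈ S) :
    rk S (i + 1) = rk S i + 1 := by
  have h : S.filter (· ≤ i + 1) = insert (i + 1) (S.filter (· ≤ i)) := by
    ext x
    simp only [Finset.mem_filter, Finset.mem_insert]
    constructor
    · rintro ⟨hx, hle⟩
      rcases Nat.lt_or_ge x (i + 1) with h | h
      · exact Or.inr ⟨hx, by omega⟩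
      · exact Or.inl (by omega)
    · rintro (rfl | ⟨hx, hle⟩)
      · exact ⟨hi1, le_refl _⟩
      · exact ⟨hx, by omega⟩
  rw [rk, rk, h, Finset.card_insert_of_notMem]
  intro hmem
  have := (Finset.mem_filter.1 hmem).2
  omega

lemma rk_top {S : Finset ℕ} {N : ℕ} (hS : S ⊆ Finset.Icc 1 N) (hN : N ∈ S) :
    rk S N = S.card := by
  rw [rk, Finset.filter_true_of_mem]
  intro x hx
  exact (Finset.mem_Icc.1 (hS hx)).2

lemma mem_embedIn {S T : Finset ℕ} (hT : T ⊆ Finset.Icc 1 S.card) (i : ℕ) :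
    i ∈ embedIn S T ↔ i ∈ S ∧ rk S i ∈ T := by
  unfold embedIn
  simp only [Finset.mem_image]
  constructor
  · rintro ⟨t, ht, rfl⟩
    have htb := Finset.mem_Icc.1 (hT ht)
    have hk : t - 1 < S.card := by omega
    rw [sort_getD_emb S hk]
    refine ⟨Finset.orderEmbOfFin_mem _ _ _, ?_⟩
    rw [rank_emb]
    have : (⟨t - 1, hk⟩ : Fin S.card).val + 1 = t := by simp; omega
    rw [this]; exact ht
  · rintro ⟨hiS, hr⟩
    exact ⟨rk S i, hr, (rank_mem hiS).2.2⟩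

lemma perm_getD_mem {m : ℕ} {u : List ℕ} (hu : IsPermWord m u) {k : ℕ} (hk : k < m) :
    1 ≤ u.getD k 0 ∧ u.getD k 0 ≤ m := by
  have hlen : u.length = m := by simpa using hu.length_eq
  rw [List.getD_eq_getElem _ _ (by omega)]
  have hmem : u[k] ∈ u := List.getElem_mem _
  have h2 := hu.mem_iff.1 hmem
  rw [List.mem_range'_1] at h2
  omega

lemma shWord_entry (N : ℕ) (u v : List ℕ) (A : Finset ℕ) {i : ℕ} (h1 : 1 ≤ i) (h2 : i ≤ N) :
    wordEntry (shWord N u v A) i =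
      if i ∈ A then v.getD (rk A i - 1) 0 else u.getD (rk (coSet N A) i - 1) 0 := by
  unfold wordEntry shWord
  rw [List.getD_eq_getElem _ _ (by simp; omega)]
  simp only [List.getElem_map, List.getElem_range]
  rw [(by omega : i - 1 + 1 = i)]
  rfl

lemma shiftWord_getD {m : ℕ} {v : List ℕ} {k : ℕ} (hk : k < v.length) :
    (shiftWord m v).getD k 0 = v.getD k 0 + m := by
  unfold shiftWord
  rw [List.getD_eq_getElem _ _ (by simpa using hk), List.getD_eq_getElem _ _ hk,
    List.getElem_map]

lemma mem_wordDes {w : List ℕ} {i : ℕ} :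
    i ∈ wordDes w ↔ 1 ≤ i ∧ i ≤ w.length - 1 ∧ wordEntry w (i + 1) < wordEntry w i := by
  rw [wordDes, Finset.mem_filter, Finset.mem_Icc, and_assoc]


/-- the descent set of a shifted shuffle `u ⧢_A v[m]` equals
`e(A) ⊔ ((I #_A J) ∖ ē(A)) = I ⧢_A J`, where `I = Des(u)`, `J = Des(v)`. -/
theorem statement0 (m n : ℕ) (hm : 0 < m) (hn : 0 < n)
    (u v : List ℕ) (hu : IsPermWord m u) (hv : IsPermWord n v)
    (A : Finset ℕ) (hA : A ⊆ Finset.Icc 1 (m + n)) (hAcard : A.card = n) :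
    wordDes (shWord (m + n) u (shiftWord m v) A) =
      shSet (m + n) A (wordDes u) (wordDes v) := by
  have hulen : u.length = m := by simpa using hu.length_eq
  have hvlen : v.length = n := by simpa using hv.length_eq
  set N := m + n with hNdef
  set C := coSet N A with hC
  have hCsub : C ⊆ Finset.Icc 1 N := by rw [hC, coSet]; exact Finset.sdiff_subset
  have hClen : C.card = m := by
    rw [hC, coSet, Finset.card_sdiff_of_subset hA, Nat.card_Icc]; omega
  have hmemC : ∀ x, x ∈ C ↔ (1 ≤ x ∧ x ≤ N ∧ x ∉ A) := by
    intro x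
    rw [hC, coSet, Finset.mem_sdiff, Finset.mem_Icc, and_assoc]
  set I := wordDes u with hI
  set J := wordDes v with hJ
  have hImem : ∀ x, x ∈ I ↔ (1 ≤ x ∧ x ≤ m - 1 ∧ wordEntry u (x + 1) < wordEntry u x) := by
    intro x; rw [hI, mem_wordDes, hulen]
  have hJmem : ∀ x, x ∈ J ↔ (1 ≤ x ∧ x ≤ n - 1 ∧ wordEntry v (x + 1) < wordEntry v x) := by
    intro x; rw [hJ, mem_wordDes, hvlen]
  have hIsub : I ⊆ Finset.Icc 1 C.card := fun x hx => by
    rw [Finset.mem_Icc, hClen]; have := (hImem x).1 hx; omega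
  have hJsub : J ⊆ Finset.Icc 1 A.card := fun x hx => by
    rw [Finset.mem_Icc, hAcard]; have := (hJmem x).1 hx; omega
  set w := shWord N u (shiftWord m v) A with hw
  have hwlen : w.length = N := by rw [hw]; simp [shWord]
  have entryA : ∀ i, i ∈ A → wordEntry w i = v.getD (rk A i - 1) 0 + m := by
    intro i hi
    have hib := Finset.mem_Icc.1 (hA hi)
    rw [hw, shWord_entry N _ _ A hib.1 hib.2, if_pos hi]
    have h1 := rank_mem hi
    rw [hAcard] at h1
    exact shiftWord_getD (by omega)
  have entryA' : ∀ i, i ∈ A → m + 1 ≤ wordEntry w i := by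
    intro i hi
    rw [entryA i hi]
    have h1 := rank_mem hi
    rw [hAcard] at h1
    have := (perm_getD_mem hv (k := rk A i - 1) (by omega)).1
    omega
  have entryC : ∀ i, i ∈ C → wordEntry w i = u.getD (rk C i - 1) 0 := by
    intro i hi
    have hib := (hmemC i).1 hi
    rw [hw, shWord_entry N _ _ A hib.1 hib.2.1, if_neg hib.2.2, ← hC]
  have entryC' : ∀ i, i ∈ C → 1 ≤ wordEntry w i ∧ wordEntry w i ≤ m := by
    intro i hi
    rw [entryC i hi]
    have h1 := rank_mem hi
    rw [hClen] at h1
    exact perm_getD_mem hu (by omega)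
  have heA : ∀ x, x ∈ eSet N A ↔ (x ∈ A ∧ x + 1 ∉ A ∧ x ≠ N) := by
    intro x
    rw [eSet, Finset.mem_erase, Finset.mem_filter]
    tauto
  have heC : ∀ x, x ∈ eSet N C ↔ (x ∈ C ∧ x + 1 ∉ C ∧ x ≠ N) := by
    intro x
    rw [eSet, Finset.mem_erase, Finset.mem_filter]
    tauto
  ext i
  rw [mem_wordDes, hwlen]
  simp only [shSet, hashAJ, ebar, ← hC, Finset.mem_union, Finset.mem_sdiff,
    heA, heC, mem_embedIn hIsub, mem_embedIn hJsub, not_or]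
  show (1 ≤ i ∧ i ≤ N - 1 ∧ wordEntry w (i + 1) < wordEntry w i) ↔ _
  by_cases hrange : 1 ≤ i ∧ i ≤ N - 1
  · obtain ⟨h1, h2⟩ := hrange
    have hiN : i ≠ N := by omega
    by_cases hiA : i ∈ A <;> by_cases hi1A : i + 1 ∈ A
    · -- i ∈ A, i+1 ∈ A
      have hrk := rk_succ hiA hi1A
      have hb1 := rank_mem hiA
      have hb2 := rank_mem hi1A
      rw [hAcard] at hb1 hb2
      have e1 : wordEntry w i = v.getD (rk A i - 1) 0 + m := entryA i hiA
      have e2 : wordEntry w (i + 1) = v.getD (rk A i) 0 + m := by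
        rw [entryA _ hi1A, hrk, Nat.add_sub_cancel]
      have hnotC : i ∉ C := fun h => ((hmemC i).1 h).2.2 hiA
      have hJiff : rk A i ∈ J ↔ v.getD (rk A i) 0 < v.getD (rk A i - 1) 0 := by
        rw [hJmem]
        constructor
        · rintro ⟨-, -, h⟩
          simpa [wordEntry, Nat.add_sub_cancel] using h
        · intro h
          exact ⟨by omega, by omega, by simpa [wordEntry, Nat.add_sub_cancel] using h⟩
      constructor
      · rintro ⟨-, -, hlt⟩
        rw [e1, e2] at hlt
        refine Or.inr ⟨Or.inr ⟨hiA, hJiff.2 (by omega)⟩, ?_, ?_⟩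
        · rintro ⟨-, h, -⟩; exact h hi1A
        · rintro ⟨h, -, -⟩; exact hnotC h
      · rintro (⟨-, h, -⟩ | ⟨hmem, -, -⟩)
        · exact absurd hi1A h
        · rcases hmem with ⟨h, -⟩ | ⟨-, hrJ⟩
          · exact absurd h hnotC
          · refine ⟨h1, h2, ?_⟩
            rw [e1, e2]
            have := hJiff.1 hrJ
            omega
    · -- i ∈ A, i+1 ∉ A
      constructor
      · intro _
        exact Or.inl ⟨hiA, hi1A, hiN⟩
      · intro _
        refine ⟨h1, h2, ?_⟩
        have hge := entryA' i hiA
        have hi1C : i + 1 ∈ C := (hmemC _).2 ⟨by omega, by omega, hi1A⟩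
        have hle := (entryC' _ hi1C).2
        omega
    · -- i ∉ A, i+1 ∈ A
      have hiC : i ∈ C := (hmemC _).2 ⟨h1, by omega, hiA⟩
      have hle := (entryC' _ hiC).2
      have hge := entryA' _ hi1A
      constructor
      · rintro ⟨-, -, hlt⟩; omega
      · rintro (⟨h, -⟩ | ⟨-, -, hnot⟩)
        · exact absurd h hiA
        · exact absurd ⟨hiC, fun hc => ((hmemC _).1 hc).2.2 hi1A, hiN⟩ hnot
    · -- i ∉ A, i+1 ∉ A
      have hiC : i ∈ C := (hmemC _).2 ⟨h1, by omega, hiA⟩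
      have hi1C : i + 1 ∈ C := (hmemC _).2 ⟨by omega, by omega, hi1A⟩
      have hrk := rk_succ hiC hi1C
      have hb1 := rank_mem hiC
      have hb2 := rank_mem hi1C
      rw [hClen] at hb1 hb2
      have e1 : wordEntry w i = u.getD (rk C i - 1) 0 := entryC _ hiC
      have e2 : wordEntry w (i + 1) = u.getD (rk C i) 0 := by
        rw [entryC _ hi1C, hrk, Nat.add_sub_cancel]
      have hIiff : rk C i ∈ I ↔ u.getD (rk C i) 0 < u.getD (rk C i - 1) 0 := by
        rw [hImem]
        constructor
        · rintro ⟨-, -, h⟩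
          simpa [wordEntry, Nat.add_sub_cancel] using h
        · intro h
          exact ⟨by omega, by omega, by simpa [wordEntry, Nat.add_sub_cancel] using h⟩
      constructor
      · rintro ⟨-, -, hlt⟩
        rw [e1, e2] at hlt
        refine Or.inr ⟨Or.inl ⟨hiC, hIiff.2 hlt⟩, ?_, ?_⟩
        · rintro ⟨h, -, -⟩; exact hiA h
        · rintro ⟨-, h, -⟩; exact h hi1C
      · rintro (⟨h, -⟩ | ⟨hmem, -, -⟩)
        · exact absurd h hiA
        · rcases hmem with ⟨-, hrI⟩ | ⟨h, -⟩
          · exact ⟨h1, h2, by rw [e1, e2]; exact hIiff.1 hrI⟩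
          · exact absurd h hiA
  · -- out of range
    constructor
    · rintro ⟨ha, hb, -⟩
      exact absurd ⟨ha, hb⟩ hrange
    · rintro (⟨hiA, -, hiN⟩ | ⟨hmem, -, -⟩)
      · have := Finset.mem_Icc.1 (hA hiA)
        omega
      · rcases hmem with ⟨hiC, hrI⟩ | ⟨hiA, hrJ⟩
        · have hb := (hmemC i).1 hiC
          have hiN : i = N := by omega
          subst hiN
          rw [rk_top hCsub hiC, hClen] at hrI
          have := (hImem m).1 hrI
          omega
        · have hb := Finset.mem_Icc.1 (hA hiA)
          have hiN : i = N := by omega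
          subst hiN
          rw [rk_top hA hiA, hAcard] at hrJ
          have := (hJmem n).1 hrJ
          omega


end
end QSymPaper
end

section
/- Let ν > 1 be an integer and n ≥ 1. For every I ⊆ [n−1], L_{comp(I)} = ∑_{J ⊆ [n−1]} (−1)^{|J∖I|} (ν−1)^{|I∩J|} K_{comp(J)}(ν), as an identity of quasisymmetric functions over ℂ. -/
namespace QSymPaper

attribute [local instance 0] Classical.propDecidable

noncomputable section

open Finset in
lemma key5 (ν : ℤ) (E I I' : Finset ℕ) (hI : I ⊆ E) (hI' : I' ⊆ E) :
    ∑ J ∈ E.powerset,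
      ((-1 : ℂ) ^ ((J \ I).card) * ((ν : ℂ) - 1) ^ ((I ∩ J).card)) *
      ((-1 : ℂ) ^ ((J \ I').card) * ((ν : ℂ) - 1) ^ ((E \ (I' ∪ J)).card)) =
    if I = I' then (ν : ℂ) ^ E.card else 0 := by
  classical
  set f : ℕ → ℂ := fun e => ((if e ∈ I then 1 else -1) * (if e ∈ I' then 1 else -1)) *
    (if e ∈ I then (ν:ℂ) - 1 else 1) with hf
  set g : ℕ → ℂ := fun e => (if e ∈ I' then (1:ℂ) else (ν:ℂ) - 1) with hg
  have hc : ∀ (c : ℂ) (J K : Finset ℕ),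
      (∏ e ∈ J, (if e ∈ K then (1:ℂ) else c)) = c ^ ((J \ K).card) := by
    intro c J K
    rw [Finset.prod_ite, Finset.prod_const, Finset.prod_const, one_pow, one_mul]
    congr 1
    congr 1
    ext e
    simp [Finset.mem_sdiff]
  have hprodK : ∀ J K : Finset ℕ,
      (∏ e ∈ J, (if e ∈ K then ((ν:ℂ) - 1) else 1)) = ((ν:ℂ) - 1) ^ ((J ∩ K).card) := by
    intro J K
    rw [Finset.prod_ite, Finset.prod_const, Finset.prod_const, one_pow, mul_one,
      Finset.filter_mem_eq_inter]
  have hsummand : ∀ J ∈ E.powerset,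
      ((-1 : ℂ) ^ ((J \ I).card) * ((ν : ℂ) - 1) ^ ((I ∩ J).card)) *
      ((-1 : ℂ) ^ ((J \ I').card) * ((ν : ℂ) - 1) ^ ((E \ (I' ∪ J)).card)) =
      (∏ e ∈ J, f e) * ∏ e ∈ E \ J, g e := by
    intro J _
    have h1 : ∏ e ∈ J, f e =
        ((-1 : ℂ) ^ ((J \ I).card) * (-1 : ℂ) ^ ((J \ I').card)) *
          ((ν:ℂ) - 1) ^ ((J ∩ I).card) := by
      rw [hf, Finset.prod_mul_distrib, Finset.prod_mul_distrib, hc, hc, hprodK]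
    have h2 : ∏ e ∈ E \ J, g e = ((ν:ℂ) - 1) ^ ((E \ (I' ∪ J)).card) := by
      rw [hg, hc]
      congr 2
      ext e
      simp only [Finset.mem_sdiff, Finset.mem_union]
      tauto
    rw [h1, h2, Finset.inter_comm I J]
    ring
  rw [Finset.sum_congr rfl hsummand, ← Finset.prod_add]
  have hfg : ∀ e, f e + g e = if (e ∈ I ↔ e ∈ I') then (ν:ℂ) else 0 := by
    intro e
    by_cases h1 : e ∈ I <;> by_cases h2 : e ∈ I' <;> simp [hf, hg, h1, h2]
  by_cases hII : I = I'
  · subst hII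
    rw [if_pos rfl]
    calc ∏ e ∈ E, (f e + g e) = ∏ e ∈ E, (ν:ℂ) := by
          refine Finset.prod_congr rfl fun e _ => ?_
          rw [hfg]; simp
      _ = (ν:ℂ) ^ E.card := Finset.prod_const _
  · rw [if_neg hII]
    have hex : ∃ e, ¬ (e ∈ I ↔ e ∈ I') := by
      by_contra h
      push_neg at h
      exact hII (Finset.ext fun e => h e)
    obtain ⟨e, he⟩ := hex
    have heE : e ∈ E := by
      by_cases h1 : e ∈ I
      · exact hI h1
      · by_cases h2 : e ∈ I'
        · exact hI' h2
        · exact absurd (iff_of_false h1 h2) he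
    exact Finset.prod_eq_zero heE (by rw [hfg, if_neg he])

/-- expansion of the fundamental quasisymmetric function in the
basis `{K_{comp(J)}(ν)}`. -/
theorem statement5 (ν : ℤ) (hν : 1 < ν) (n : ℕ) (hn : 1 ≤ n)
    (I : Finset ℕ) (hI : I ⊆ Finset.Icc 1 (n - 1)) :
    Lqs ℕ ℂ (fun _ => True) n I =
      ∑ J ∈ (Finset.Icc 1 (n - 1)).powerset,
        ((-1 : ℂ) ^ ((J \ I).card) * ((ν : ℂ) - 1) ^ ((I ∩ J).card)) •
          Kset ℕ (fun _ => True) ν n J := by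
  classical
  have hν0 : (ν : ℂ) ≠ 0 := by
    simp only [ne_eq, Int.cast_eq_zero]; omega
  set E := Finset.Icc 1 (n - 1) with hE
  set s : ℂ := (ν : ℂ) ^ (-((n : ℤ) - 1)) with hs
  set L : Finset ℕ → MvPowerSeries ℕ ℂ := fun S => Lqs ℕ ℂ (fun _ => True) n S with hL
  have hcardE : (E.card : ℤ) = (n : ℤ) - 1 := by
    rw [hE, Nat.card_Icc]; omega
  have hs1 : s * (ν : ℂ) ^ E.card = 1 := by
    rw [hs, ← zpow_natCast (ν : ℂ) E.card, hcardE, ← zpow_add₀ hν0]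
    simp
  symm
  calc ∑ J ∈ E.powerset, ((-1:ℂ)^((J\I).card) * ((ν:ℂ)-1)^((I∩J).card)) •
          Kset ℕ (fun _ => True) ν n J
      = ∑ J ∈ E.powerset, ∑ I' ∈ E.powerset,
          (((((-1:ℂ)^((J\I).card) * ((ν:ℂ)-1)^((I∩J).card))) * s) *
            ((-1:ℂ)^((J\I').card) * ((ν:ℂ)-1)^((E\(I'∪J)).card))) • L I' := by
        refine Finset.sum_congr rfl fun J hJ => ?_
        rw [Kset, smul_smul, Finset.smul_sum]
        exact Finset.sum_congr rfl fun I' _ => (smul_smul _ _ _)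
    _ = ∑ I' ∈ E.powerset,
          (s * ∑ J ∈ E.powerset,
            (((-1:ℂ)^((J\I).card) * ((ν:ℂ)-1)^((I∩J).card)) *
              ((-1:ℂ)^((J\I').card) * ((ν:ℂ)-1)^((E\(I'∪J)).card)))) • L I' := by
        rw [Finset.sum_comm]
        refine Finset.sum_congr rfl fun I' _ => ?_
        rw [Finset.mul_sum, ← Finset.sum_smul]
        refine congrArg (· • L I') ?_
        refine Finset.sum_congr rfl fun J _ => ?_
        ring
    _ = ∑ I' ∈ E.powerset, (if I = I' then s * (ν:ℂ) ^ E.card else 0) • L I' := by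
        refine Finset.sum_congr rfl fun I' hI' => ?_
        rw [key5 ν E I I' hI (Finset.mem_powerset.mp hI')]
        rw [mul_ite, mul_zero]
    _ = L I := by
        simp only [ite_smul, zero_smul]
        rw [Finset.sum_ite_eq E.powerset I (fun I' => (s * (ν:ℂ) ^ E.card) • L I'),
          if_pos (Finset.mem_powerset.mpr hI), hs1, one_smul]

end
end QSymPaper
end

section
/- Let ν > 1 be an integer and n ≥ 1. For every I ⊆ [n−1], M_{comp(I)} = ∑_{J ⊆ [n−1], I∪J = [n−1]} (−ν)^{|J∖I|} (ν−1)^{|I∩J|} K_{comp(J)}(ν), as an identity of quasisymmetric functions over ℂ. -/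
namespace QSymPaper

attribute [local instance 0] Classical.propDecidable

noncomputable section

lemma L1 {a : ℕ} {J : Finset ℕ} (haJ : a ∉ J) (X : Finset ℕ) : J \ X.erase a = J \ X := by
  ext y
  by_cases hy : y = a
  · subst hy; simp [haJ]
  · simp [Finset.mem_sdiff, Finset.mem_erase, hy]

lemma L2 {a : ℕ} {J : Finset ℕ} (haJ : a ∉ J) (X : Finset ℕ) : X.erase a ∩ J = X ∩ J := by
  ext y
  by_cases hy : y = a
  · subst hy; simp [haJ]
  · simp [Finset.mem_erase, hy]

lemma L3 {a : ℕ} {J X : Finset ℕ} (haJ : a ∉ J) (haX : a ∈ X) :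
    insert a J \ X = J \ X.erase a := by
  ext y
  by_cases hy : y = a
  · subst hy; simp [haX, haJ]
  · simp [Finset.mem_sdiff, Finset.mem_erase, hy]

lemma L3' {a : ℕ} {J X : Finset ℕ} (haJ : a ∉ J) (haX : a ∉ X) :
    insert a J \ X = insert a (J \ X.erase a) := by
  ext y
  by_cases hy : y = a
  · subst hy; simp [haX]
  · simp [Finset.mem_sdiff, Finset.mem_erase, hy]

lemma L4 {a : ℕ} {J X : Finset ℕ} (haJ : a ∉ J) (haX : a ∈ X) :
    X ∩ insert a J = insert a (X.erase a ∩ J) := by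
  ext y
  by_cases hy : y = a
  · subst hy; simp [haX]
  · simp [Finset.mem_erase, hy]

lemma L4' {a : ℕ} {J X : Finset ℕ} (haX : a ∉ X) : X ∩ insert a J = X.erase a ∩ J := by
  ext y
  by_cases hy : y = a
  · subst hy; simp [haX]
  · simp [Finset.mem_erase, hy]

lemma L5 {a : ℕ} {s : Finset ℕ} (haS : a ∉ s) (Y : Finset ℕ) (hmem : a ∈ Y) :
    insert a s \ Y = s \ Y.erase a := by
  ext y
  by_cases hy : y = a
  · subst hy; simp [hmem, haS]
  · simp [Finset.mem_sdiff, Finset.mem_erase, hy]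

lemma L5' {a : ℕ} {s : Finset ℕ} (haS : a ∉ s) (Y : Finset ℕ) (hmem : a ∉ Y) :
    insert a s \ Y = insert a (s \ Y.erase a) := by
  ext y
  by_cases hy : y = a
  · subst hy; simp [hmem, haS]
  · simp [Finset.mem_sdiff, Finset.mem_erase, hy]

lemma L6 {a : ℕ} {s J I : Finset ℕ} (haJ : a ∉ J) (haS : a ∉ s) :
    I ∪ J = insert a s ↔ a ∈ I ∧ I.erase a ∪ J = s := by
  constructor
  · intro h
    have haI : a ∈ I := by
      rcases Finset.mem_union.mp (h ▸ Finset.mem_insert_self a s) with h' | h'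
      · exact h'
      · exact absurd h' haJ
    refine ⟨haI, ?_⟩
    have h2 := congrArg (Finset.erase · a) h
    simp only [Finset.erase_union_distrib, Finset.erase_eq_of_notMem haJ,
      Finset.erase_insert haS] at h2
    exact h2
  · rintro ⟨haI, h⟩
    rw [← h, ← Finset.insert_union, Finset.insert_erase haI]

lemma L7 {a : ℕ} {s J I : Finset ℕ} (haJ : a ∉ J) (haS : a ∉ s) :
    I ∪ insert a J = insert a s ↔ I.erase a ∪ J = s := by
  constructor
  · intro h
    have h2 := congrArg (Finset.erase · a) h
    simp only [Finset.erase_union_distrib, Finset.erase_insert haJ,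
      Finset.erase_insert haS, Finset.erase_eq_of_notMem haJ] at h2
    exact h2
  · intro h
    ext y
    by_cases hy : y = a
    · subst hy; simp
    · have : y ∈ I.erase a ∪ J ↔ y ∈ s := by rw [h]
      simp only [Finset.mem_union, Finset.mem_erase, hy, ne_eq, not_false_iff, true_and] at this
      simp [Finset.mem_union, Finset.mem_insert, hy, ← this]




lemma keyB (x : ℂ) (N : Finset ℕ) : ∀ I T : Finset ℕ, I ⊆ N → T ⊆ N →
    (∑ J ∈ N.powerset.filter (fun J => I ∪ J = N),
      (-x) ^ ((J \ I).card) * (x - 1) ^ ((I ∩ J).card) *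
        ((-1 : ℂ) ^ ((J \ T).card) * (x - 1) ^ ((N \ (T ∪ J)).card)))
    = if I ⊆ T then (-1 : ℂ) ^ ((T \ I).card) * x ^ N.card else 0 := by
  induction N using Finset.induction_on with
  | empty =>
    intro I T hI hT
    rw [Finset.subset_empty] at hI hT
    subst hI; subst hT
    simp [Finset.filter_singleton]
  | @insert a s ha IH =>
    intro I T hI hT
    have hI0s : I.erase a ⊆ s := by
      intro y hy
      rcases Finset.mem_erase.mp hy with ⟨hya, hyI⟩
      rcases Finset.mem_insert.mp (hI hyI) with h | h
      · exact absurd h hya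
      · exact h
    have hT0s : T.erase a ⊆ s := by
      intro y hy
      rcases Finset.mem_erase.mp hy with ⟨hya, hyT⟩
      rcases Finset.mem_insert.mp (hT hyT) with h | h
      · exact absurd h hya
      · exact h
    have hS0 := IH (I.erase a) (T.erase a) hI0s hT0s
    rw [Finset.sum_filter] at hS0
    rw [Finset.sum_filter, Finset.sum_powerset_insert ha]
    have key1 : ∀ J ∈ s.powerset,
        (if I ∪ J = insert a s then
          (-x) ^ ((J \ I).card) * (x - 1) ^ ((I ∩ J).card) *
            ((-1 : ℂ) ^ ((J \ T).card) * (x - 1) ^ ((insert a s \ (T ∪ J)).card)) else 0)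
        = (if a ∈ I then (if a ∈ T then 1 else (x - 1)) else 0) *
          (if I.erase a ∪ J = s then
            (-x) ^ ((J \ I.erase a).card) * (x - 1) ^ ((I.erase a ∩ J).card) *
              ((-1 : ℂ) ^ ((J \ T.erase a).card) *
                (x - 1) ^ ((s \ (T.erase a ∪ J)).card)) else 0) := by
      intro J hJ
      have hJs : J ⊆ s := Finset.mem_powerset.mp hJ
      have haJ : a ∉ J := fun h => ha (hJs h)
      by_cases haI : a ∈ I
      · have hcond : (I ∪ J = insert a s) ↔ (I.erase a ∪ J = s) := by
          rw [L6 haJ ha]; simp [haI]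
        by_cases haT : a ∈ T
        · have hterm :
              (-x) ^ ((J \ I).card) * (x - 1) ^ ((I ∩ J).card) *
                ((-1 : ℂ) ^ ((J \ T).card) * (x - 1) ^ ((insert a s \ (T ∪ J)).card))
              = (-x) ^ ((J \ I.erase a).card) * (x - 1) ^ ((I.erase a ∩ J).card) *
                  ((-1 : ℂ) ^ ((J \ T.erase a).card) *
                    (x - 1) ^ ((s \ (T.erase a ∪ J)).card)) := by
            rw [← L1 haJ I, ← L2 haJ I, ← L1 haJ T,
              L5 ha (T ∪ J) (Finset.mem_union_left _ haT),
              Finset.erase_union_distrib, Finset.erase_eq_of_notMem haJ]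
          simp only [haI, haT, if_true]
          rw [if_congr hcond hterm rfl, one_mul]
        · have hterm :
              (-x) ^ ((J \ I).card) * (x - 1) ^ ((I ∩ J).card) *
                ((-1 : ℂ) ^ ((J \ T).card) * (x - 1) ^ ((insert a s \ (T ∪ J)).card))
              = (x - 1) * ((-x) ^ ((J \ I.erase a).card) * (x - 1) ^ ((I.erase a ∩ J).card) *
                  ((-1 : ℂ) ^ ((J \ T.erase a).card) *
                    (x - 1) ^ ((s \ (T.erase a ∪ J)).card))) := by
            rw [← L1 haJ I, ← L2 haJ I, ← L1 haJ T,
              L5' ha (T ∪ J) (by simp [haT, haJ]),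
              Finset.card_insert_of_notMem (by simp [ha]),
              Finset.erase_union_distrib, Finset.erase_eq_of_notMem haJ]
            ring
          simp only [haI, haT, if_true, if_false]
          rw [if_congr hcond hterm rfl, mul_ite, mul_zero]
      · have hcond : ¬(I ∪ J = insert a s) := by
          intro h
          rcases Finset.mem_union.mp (h ▸ Finset.mem_insert_self a s) with h' | h'
          · exact haI h'
          · exact haJ h'
        rw [if_neg hcond]
        simp [haI]
    have key2 : ∀ J ∈ s.powerset,
        (if I ∪ insert a J = insert a s then
          (-x) ^ ((insert a J \ I).card) * (x - 1) ^ ((I ∩ insert a J).card) *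
            ((-1 : ℂ) ^ ((insert a J \ T).card) *
              (x - 1) ^ ((insert a s \ (T ∪ insert a J)).card)) else 0)
        = ((if a ∈ I then (x - 1) else -x) * (if a ∈ T then 1 else -1)) *
          (if I.erase a ∪ J = s then
            (-x) ^ ((J \ I.erase a).card) * (x - 1) ^ ((I.erase a ∩ J).card) *
              ((-1 : ℂ) ^ ((J \ T.erase a).card) *
                (x - 1) ^ ((s \ (T.erase a ∪ J)).card)) else 0) := by
      intro J hJ
      have hJs : J ⊆ s := Finset.mem_powerset.mp hJ
      have haJ : a ∉ J := fun h => ha (hJs h)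
      have hcond : (I ∪ insert a J = insert a s) ↔ (I.erase a ∪ J = s) := L7 haJ ha
      have hlast : insert a s \ (T ∪ insert a J) = s \ (T.erase a ∪ J) := by
        rw [L5 ha _ (Finset.mem_union_right _ (Finset.mem_insert_self a J)),
          Finset.erase_union_distrib, Finset.erase_insert haJ]
      by_cases haI : a ∈ I <;> by_cases haT : a ∈ T
      · have hterm : (-x) ^ ((insert a J \ I).card) * (x - 1) ^ ((I ∩ insert a J).card) *
            ((-1 : ℂ) ^ ((insert a J \ T).card) *
              (x - 1) ^ ((insert a s \ (T ∪ insert a J)).card))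
            = ((x - 1) * 1) * ((-x) ^ ((J \ I.erase a).card) * (x - 1) ^ ((I.erase a ∩ J).card) *
                ((-1 : ℂ) ^ ((J \ T.erase a).card) *
                  (x - 1) ^ ((s \ (T.erase a ∪ J)).card))) := by
          rw [L3 haJ haI, L4 haJ haI, L3 haJ haT, hlast,
            Finset.card_insert_of_notMem (fun h => haJ (Finset.mem_inter.mp h).2)]
          ring
        simp only [haI, haT, if_true]
        rw [if_congr hcond hterm rfl, mul_ite, mul_zero]
      · have hterm : (-x) ^ ((insert a J \ I).card) * (x - 1) ^ ((I ∩ insert a J).card) *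
            ((-1 : ℂ) ^ ((insert a J \ T).card) *
              (x - 1) ^ ((insert a s \ (T ∪ insert a J)).card))
            = ((x - 1) * (-1)) * ((-x) ^ ((J \ I.erase a).card) * (x - 1) ^ ((I.erase a ∩ J).card) *
                ((-1 : ℂ) ^ ((J \ T.erase a).card) *
                  (x - 1) ^ ((s \ (T.erase a ∪ J)).card))) := by
          rw [L3 haJ haI, L4 haJ haI, L3' haJ haT, hlast,
            Finset.card_insert_of_notMem (fun h => haJ (Finset.mem_inter.mp h).2),
            Finset.card_insert_of_notMem (fun h => haJ (Finset.mem_sdiff.mp h).1)]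
          ring
        simp only [haI, haT, if_true, if_false]
        rw [if_congr hcond hterm rfl, mul_ite, mul_zero]
      · have hterm : (-x) ^ ((insert a J \ I).card) * (x - 1) ^ ((I ∩ insert a J).card) *
            ((-1 : ℂ) ^ ((insert a J \ T).card) *
              (x - 1) ^ ((insert a s \ (T ∪ insert a J)).card))
            = ((-x) * 1) * ((-x) ^ ((J \ I.erase a).card) * (x - 1) ^ ((I.erase a ∩ J).card) *
                ((-1 : ℂ) ^ ((J \ T.erase a).card) *
                  (x - 1) ^ ((s \ (T.erase a ∪ J)).card))) := by
          rw [L3' haJ haI, L4' haI, L3 haJ haT, hlast,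
            Finset.card_insert_of_notMem (fun h => haJ (Finset.mem_sdiff.mp h).1)]
          ring
        simp only [haI, haT, if_true, if_false]
        rw [if_congr hcond hterm rfl, mul_ite, mul_zero]
      · have hterm : (-x) ^ ((insert a J \ I).card) * (x - 1) ^ ((I ∩ insert a J).card) *
            ((-1 : ℂ) ^ ((insert a J \ T).card) *
              (x - 1) ^ ((insert a s \ (T ∪ insert a J)).card))
            = ((-x) * (-1)) * ((-x) ^ ((J \ I.erase a).card) * (x - 1) ^ ((I.erase a ∩ J).card) *
                ((-1 : ℂ) ^ ((J \ T.erase a).card) *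
                  (x - 1) ^ ((s \ (T.erase a ∪ J)).card))) := by
          rw [L3' haJ haI, L4' haI, L3' haJ haT, hlast,
            Finset.card_insert_of_notMem (fun h => haJ (Finset.mem_sdiff.mp h).1),
            Finset.card_insert_of_notMem (fun h => haJ (Finset.mem_sdiff.mp h).1)]
          ring
        simp only [haI, haT, if_false]
        rw [if_congr hcond hterm rfl, mul_ite, mul_zero]
    rw [Finset.sum_congr rfl key1, Finset.sum_congr rfl key2, ← Finset.mul_sum, ← Finset.mul_sum,
      ← add_mul, hS0, Finset.card_insert_of_notMem ha]
    by_cases haI : a ∈ I <;> by_cases haT : a ∈ T <;>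
      simp only [haI, haT, if_true, if_false]
    · by_cases hsub : I.erase a ⊆ T.erase a
      · have hsub' : I ⊆ T := by
          intro y hy
          by_cases hy' : y = a
          · subst hy'; exact haT
          · exact Finset.mem_of_mem_erase (hsub (Finset.mem_erase.mpr ⟨hy', hy⟩))
        have hTI : T \ I = T.erase a \ I.erase a := by
          ext y
          by_cases hy : y = a
          · subst hy; simp [haI]
          · simp [Finset.mem_sdiff, Finset.mem_erase, hy]
        rw [if_pos hsub, if_pos hsub', hTI]
        ring
      · have hsub' : ¬ I ⊆ T := fun h => hsub (fun y hy =>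
          Finset.mem_erase.mpr ⟨(Finset.mem_erase.mp hy).1, h (Finset.mem_erase.mp hy).2⟩)
        rw [if_neg hsub, if_neg hsub']
        ring
    · have hsub' : ¬ I ⊆ T := fun h => haT (h haI)
      rw [if_neg hsub']
      ring
    · by_cases hsub : I.erase a ⊆ T.erase a
      · have hsub' : I ⊆ T := by
          intro y hy
          have hy' : y ≠ a := fun h => haI (h ▸ hy)
          exact Finset.mem_of_mem_erase (hsub (Finset.mem_erase.mpr ⟨hy', hy⟩))
        have hTI : T \ I = insert a (T.erase a \ I.erase a) := by
          ext y
          by_cases hy : y = a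
          · subst hy; simp [haT, haI]
          · simp [Finset.mem_sdiff, Finset.mem_erase, hy]
        rw [if_pos hsub, if_pos hsub', hTI,
          Finset.card_insert_of_notMem (fun h => (Finset.mem_erase.mp (Finset.mem_sdiff.mp h).1).1 rfl)]
        ring
      · have hsub' : ¬ I ⊆ T := fun h => hsub (fun y hy =>
          Finset.mem_erase.mpr ⟨(Finset.mem_erase.mp hy).1, h (Finset.mem_erase.mp hy).2⟩)
        rw [if_neg hsub, if_neg hsub']
        ring
    · by_cases hsub : I.erase a ⊆ T.erase a
      · have hsub' : I ⊆ T := by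
          intro y hy
          have hy' : y ≠ a := fun h => haI (h ▸ hy)
          exact Finset.mem_of_mem_erase (hsub (Finset.mem_erase.mpr ⟨hy', hy⟩))
        have hTI : T \ I = T.erase a \ I.erase a := by
          ext y
          by_cases hy : y = a
          · subst hy; simp [haT]
          · simp [Finset.mem_sdiff, Finset.mem_erase, hy]
        rw [if_pos hsub, if_pos hsub', hTI]
        ring
      · have hsub' : ¬ I ⊆ T := fun h => hsub (fun y hy =>
          Finset.mem_erase.mpr ⟨(Finset.mem_erase.mp hy).1, h (Finset.mem_erase.mp hy).2⟩)
        rw [if_neg hsub, if_neg hsub']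
        ring


lemma neg_one_pow_sum (s : Finset ℕ) :
    ∑ t ∈ s.powerset, (-1 : ℂ) ^ t.card = if s = ∅ then 1 else 0 := by
  have h := Finset.sum_powerset_neg_one_pow_card (x := s)
  have : ∑ t ∈ s.powerset, (-1 : ℂ) ^ t.card
      = ((∑ t ∈ s.powerset, (-1 : ℤ) ^ t.card : ℤ) : ℂ) := by
    push_cast
    rfl
  rw [this, h]
  split_ifs <;> simp

lemma scalar_mobius (N S I : Finset ℕ) (hS : S ⊆ N) (hI : I ⊆ N) :
    ∑ T ∈ N.powerset, (if I ⊆ T ∧ T ⊆ S then (-1 : ℂ) ^ ((T \ I).card) else 0)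
    = if S = I then 1 else 0 := by
  by_cases hIS : I ⊆ S
  · have h1 : ∑ T ∈ N.powerset, (if I ⊆ T ∧ T ⊆ S then (-1 : ℂ) ^ ((T \ I).card) else 0)
        = ∑ T ∈ S.powerset, (if I ⊆ T ∧ T ⊆ S then (-1 : ℂ) ^ ((T \ I).card) else 0) := by
      refine (Finset.sum_subset (Finset.powerset_mono.mpr hS) fun T _ hT => ?_).symm
      rw [if_neg]
      intro h
      exact hT (Finset.mem_powerset.mpr h.2)
    rw [h1]
    have h2 : ∑ T ∈ S.powerset, (if I ⊆ T ∧ T ⊆ S then (-1 : ℂ) ^ ((T \ I).card) else 0)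
        = ∑ T ∈ S.powerset.filter (fun T => I ⊆ T), (-1 : ℂ) ^ ((T \ I).card) := by
      rw [Finset.sum_filter]
      refine Finset.sum_congr rfl fun T hT => ?_
      have := Finset.mem_powerset.mp hT
      simp [this]
    rw [h2]
    have h3 : ∑ T ∈ S.powerset.filter (fun T => I ⊆ T), (-1 : ℂ) ^ ((T \ I).card)
        = ∑ U ∈ (S \ I).powerset, (-1 : ℂ) ^ U.card := by
      refine Finset.sum_nbij' (fun T => T \ I) (fun U => I ∪ U) ?_ ?_ ?_ ?_ ?_
      · intro T hT
        rcases Finset.mem_filter.mp hT with ⟨hT1, hT2⟩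
        exact Finset.mem_powerset.mpr
          (Finset.sdiff_subset_sdiff (Finset.mem_powerset.mp hT1) (le_refl I))
      · intro U hU
        have hU' := Finset.mem_powerset.mp hU
        refine Finset.mem_filter.mpr ⟨Finset.mem_powerset.mpr ?_, Finset.subset_union_left⟩
        exact Finset.union_subset hIS (hU'.trans Finset.sdiff_subset)
      · intro T hT
        exact Finset.union_sdiff_of_subset (Finset.mem_filter.mp hT).2
      · intro U hU
        have hU' := Finset.mem_powerset.mp hU
        refine Finset.union_sdiff_cancel_left ?_
        exact Finset.disjoint_left.mpr fun y hyI hyU => (Finset.mem_sdiff.mp (hU' hyU)).2 hyI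
      · intro T _
        rfl
    rw [h3, neg_one_pow_sum]
    have : (S \ I = ∅) ↔ (S = I) := by
      rw [Finset.sdiff_eq_empty_iff_subset]
      exact ⟨fun h => Finset.Subset.antisymm h hIS, fun h => h ▸ le_refl S⟩
    simp [this]
  · rw [Finset.sum_eq_zero, if_neg]
    · intro h; exact hIS (h ▸ le_refl I)
    · intro T _
      rw [if_neg]
      rintro ⟨h1, h2⟩
      exact hIS (h1.trans h2)

lemma mobius0 (MM : Finset ℕ → MvPowerSeries ℕ ℂ) (N I : Finset ℕ) (hI : I ⊆ N) :
    ∑ T ∈ N.powerset.filter (fun T => I ⊆ T),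
        ((-1 : ℂ) ^ ((T \ I).card)) • ∑ S ∈ N.powerset.filter (fun S => T ⊆ S), MM S
      = MM I := by
  calc
    ∑ T ∈ N.powerset.filter (fun T => I ⊆ T),
        ((-1 : ℂ) ^ ((T \ I).card)) • ∑ S ∈ N.powerset.filter (fun S => T ⊆ S), MM S
      = ∑ T ∈ N.powerset, ∑ S ∈ N.powerset,
          (if I ⊆ T ∧ T ⊆ S then ((-1 : ℂ) ^ ((T \ I).card)) • MM S else 0) := by
        rw [Finset.sum_filter]
        refine Finset.sum_congr rfl fun T _ => ?_
        split_ifs with h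
        · rw [Finset.smul_sum, Finset.sum_filter]
          refine Finset.sum_congr rfl fun S _ => ?_
          simp [h]
        · rw [Finset.sum_eq_zero]
          intro S _
          simp [h]
    _ = ∑ S ∈ N.powerset,
          (∑ T ∈ N.powerset, (if I ⊆ T ∧ T ⊆ S then ((-1 : ℂ) ^ ((T \ I).card)) else 0)) • MM S := by
        rw [Finset.sum_comm]
        refine Finset.sum_congr rfl fun S _ => ?_
        rw [Finset.sum_smul]
        refine Finset.sum_congr rfl fun T _ => ?_
        rw [ite_smul, zero_smul]
    _ = ∑ S ∈ N.powerset, (if S = I then (1 : ℂ) else 0) • MM S := by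
        refine Finset.sum_congr rfl fun S hS => ?_
        rw [scalar_mobius N S I (Finset.mem_powerset.mp hS) hI]
    _ = MM I := by
        rw [Finset.sum_congr rfl (fun S _ => by rw [ite_smul, zero_smul, one_smul] :
          ∀ S ∈ N.powerset, (if S = I then (1 : ℂ) else 0) • MM S
            = if S = I then MM S else 0)]
        rw [Finset.sum_ite_eq' N.powerset I MM]
        exact if_pos (Finset.mem_powerset.mpr hI)


/-- expansion of the monomial quasisymmetric function in the
basis `{K_{comp(J)}(ν)}`. -/
theorem statement6 (ν : ℤ) (hν : 1 < ν) (n : ℕ) (hn : 1 ≤ n)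
    (I : Finset ℕ) (hI : I ⊆ Finset.Icc 1 (n - 1)) :
    Mqs ℕ ℂ (fun _ => True) (compOf n I) =
      ∑ J ∈ (Finset.Icc 1 (n - 1)).powerset.filter
          (fun J => I ∪ J = Finset.Icc 1 (n - 1)),
        ((-(ν : ℂ)) ^ ((J \ I).card) * ((ν : ℂ) - 1) ^ ((I ∩ J).card)) •
          Kset ℕ (fun _ => True) ν n J := by
  have hν0 : (ν : ℂ) ≠ 0 := by
    simp only [ne_eq, Int.cast_eq_zero]
    omega
  have hcard : (Finset.Icc 1 (n - 1)).card = n - 1 := by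
    rw [Nat.card_Icc]
    omega
  have hz : (ν : ℂ) ^ (-((n : ℤ) - 1)) * (ν : ℂ) ^ ((n - 1 : ℕ)) = 1 := by
    rw [← zpow_natCast (ν : ℂ) (n - 1), ← zpow_add₀ hν0]
    have h1 : (-((n : ℤ) - 1) + ((n - 1 : ℕ) : ℤ)) = 0 := by
      have : ((n - 1 : ℕ) : ℤ) = (n : ℤ) - 1 := by omega
      omega
    rw [h1, zpow_zero]
  symm
  calc
    ∑ J ∈ (Finset.Icc 1 (n - 1)).powerset.filter
        (fun J => I ∪ J = Finset.Icc 1 (n - 1)),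
        ((-(ν : ℂ)) ^ ((J \ I).card) * ((ν : ℂ) - 1) ^ ((I ∩ J).card)) •
          Kset ℕ (fun _ => True) ν n J
      = ∑ J ∈ (Finset.Icc 1 (n - 1)).powerset.filter
          (fun J => I ∪ J = Finset.Icc 1 (n - 1)),
          ∑ T ∈ (Finset.Icc 1 (n - 1)).powerset,
            ((ν : ℂ) ^ (-((n : ℤ) - 1)) *
              ((-(ν : ℂ)) ^ ((J \ I).card) * ((ν : ℂ) - 1) ^ ((I ∩ J).card) *
                ((-1 : ℂ) ^ ((J \ T).card) *
                  ((ν : ℂ) - 1) ^ ((Finset.Icc 1 (n - 1) \ (T ∪ J)).card)))) •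
              Lqs ℕ ℂ (fun _ => True) n T := by
        refine Finset.sum_congr rfl fun J _ => ?_
        simp only [Kset]
        rw [smul_smul, Finset.smul_sum]
        refine Finset.sum_congr rfl fun T _ => ?_
        rw [smul_smul]
        congr 1
        ring
    _ = ∑ T ∈ (Finset.Icc 1 (n - 1)).powerset,
          ∑ J ∈ (Finset.Icc 1 (n - 1)).powerset.filter
            (fun J => I ∪ J = Finset.Icc 1 (n - 1)),
            ((ν : ℂ) ^ (-((n : ℤ) - 1)) *
              ((-(ν : ℂ)) ^ ((J \ I).card) * ((ν : ℂ) - 1) ^ ((I ∩ J).card) *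
                ((-1 : ℂ) ^ ((J \ T).card) *
                  ((ν : ℂ) - 1) ^ ((Finset.Icc 1 (n - 1) \ (T ∪ J)).card)))) •
              Lqs ℕ ℂ (fun _ => True) n T := Finset.sum_comm
    _ = ∑ T ∈ (Finset.Icc 1 (n - 1)).powerset,
          (if I ⊆ T then (-1 : ℂ) ^ ((T \ I).card) else 0) •
            Lqs ℕ ℂ (fun _ => True) n T := by
        refine Finset.sum_congr rfl fun T hT => ?_
        rw [← Finset.sum_smul]
        congr 1
        rw [← Finset.mul_sum,
          keyB (ν : ℂ) (Finset.Icc 1 (n - 1)) I T hI (Finset.mem_powerset.mp hT), hcard]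
        split_ifs with h
        · rw [show (ν : ℂ) ^ (-((n : ℤ) - 1)) *
              ((-1 : ℂ) ^ ((T \ I).card) * (ν : ℂ) ^ (n - 1))
              = ((ν : ℂ) ^ (-((n : ℤ) - 1)) * (ν : ℂ) ^ ((n - 1 : ℕ))) *
                (-1 : ℂ) ^ ((T \ I).card) from by ring, hz, one_mul]
        · exact mul_zero _
    _ = ∑ T ∈ (Finset.Icc 1 (n - 1)).powerset.filter (fun T => I ⊆ T),
          ((-1 : ℂ) ^ ((T \ I).card)) • Lqs ℕ ℂ (fun _ => True) n T := by
        rw [Finset.sum_filter]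
        refine Finset.sum_congr rfl fun T _ => ?_
        rw [ite_smul, zero_smul]
    _ = Mqs ℕ ℂ (fun _ => True) (compOf n I) := by
        simp only [Lqs]
        exact mobius0 (fun S => Mqs ℕ ℂ (fun _ => True) (compOf n S))
          (Finset.Icc 1 (n - 1)) I hI

end
end QSymPaper
end

section
/- Let ν > 1 be an integer and n ≥ 1. For every J ⊆ [n−1], K_{comp(J)}(ν) = (1/(1−ν))^{|J|} ∑_{I ⊆ [n−1], I∩J = ∅} ((ν−1)/ν)^{(n−1)−|I|} M_{comp(I)}, as an identity of quasisymmetric functions over ℂ. -/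
namespace QSymPaper

attribute [local instance 0] Classical.propDecidable

noncomputable section

lemma prod_ite_const (x : ℂ) (J u : Finset ℕ) :
    ∏ s ∈ u, (if s ∈ J then (-1:ℂ) else x)
      = (-1:ℂ) ^ (u ∩ J).card * x ^ (u \ J).card := by
  rw [Finset.prod_ite, Finset.prod_const, Finset.prod_const]
  have h1 : u.filter (fun s => s ∈ J) = u ∩ J := by ext s; simp
  have h2 : u.filter (fun s => s ∉ J) = u \ J := by ext s; simp
  rw [h1, h2]

lemma sum_powerset_weights (x : ℂ) (T J : Finset ℕ) :
    ∑ I ∈ T.powerset, (-1:ℂ) ^ (((T ∩ J) \ I).card) * x ^ (((T \ J) \ I).card)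
      = if T ∩ J = ∅ then (1 + x) ^ T.card else 0 := by
  have h := Finset.prod_add (fun _ : ℕ => (1:ℂ))
      (fun s => if s ∈ J then (-1:ℂ) else x) T
  simp only [Finset.prod_const_one, one_mul] at h
  have h2 : ∀ t ∈ T.powerset,
      ∏ s ∈ T \ t, (if s ∈ J then (-1:ℂ) else x)
        = (-1:ℂ) ^ (((T ∩ J) \ t).card) * x ^ (((T \ J) \ t).card) := by
    intro t _
    rw [prod_ite_const]
    congr 2
    · congr 1; ext s; simp; tauto
    · congr 1; ext s; simp; tauto
  rw [Finset.sum_congr rfl h2] at h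
  rw [← h]
  by_cases hTJ : T ∩ J = ∅
  · rw [if_pos hTJ]
    have : ∀ s ∈ T, (1:ℂ) + (if s ∈ J then (-1:ℂ) else x) = 1 + x := by
      intro s hs
      have : s ∉ J := by
        intro hsJ
        have : s ∈ T ∩ J := Finset.mem_inter.2 ⟨hs, hsJ⟩
        simp [hTJ] at this
      simp [this]
    rw [Finset.prod_congr rfl this, Finset.prod_const]
  · rw [if_neg hTJ]
    obtain ⟨s, hs⟩ := Finset.nonempty_iff_ne_empty.2 hTJ
    have hsT : s ∈ T := (Finset.mem_inter.1 hs).1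
    have hsJ : s ∈ J := (Finset.mem_inter.1 hs).2
    apply Finset.prod_eq_zero hsT
    simp [hsJ]

lemma coeff_eq (ν : ℤ) (hν : 1 < ν) (a b k : ℕ) :
    ((ν:ℂ) ^ (-((a+b+k : ℕ):ℤ))) * ((-1:ℂ)^b * ((ν:ℂ)-1)^k * (ν:ℂ)^a)
      = (1/(1-(ν:ℂ)))^b * (((ν:ℂ)-1)/(ν:ℂ))^(k + b) := by
  have hν0 : (ν:ℂ) ≠ 0 := by
    exact_mod_cast (by omega : ν ≠ 0)
  have hν1 : (1:ℂ) - (ν:ℂ) ≠ 0 := by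
    have : (ν:ℂ) ≠ 1 := by exact_mod_cast (by omega : ν ≠ 1)
    intro h; apply this; linear_combination -h
  have hu : (ν:ℂ) - 1 = -(1 - (ν:ℂ)) := by ring
  rw [zpow_neg, zpow_natCast, hu, div_pow, div_pow, neg_pow, neg_pow, one_pow]
  have hb : ((-1:ℂ))^b * (1 - (ν:ℂ))^b = (-1 + (ν:ℂ))^b := by
    rw [← mul_pow]; congr 1; ring
  field_simp
  linear_combination (ν:ℂ) ^ b * (ν:ℂ) ^ k * (ν:ℂ) ^ a * (-1 + (ν:ℂ)) ^ k * hb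

lemma card_split_J (I T J : Finset ℕ) (hIT : I ⊆ T) :
    (J \ I).card = (J \ T).card + ((T ∩ J) \ I).card := by
  rw [← Finset.card_union_of_disjoint]
  · congr 1
    ext j
    simp only [Finset.mem_sdiff, Finset.mem_union, Finset.mem_inter]
    constructor
    · rintro ⟨hj, hji⟩
      by_cases hjt : j ∈ T
      · exact Or.inr ⟨⟨hjt, hj⟩, hji⟩
      · exact Or.inl ⟨hj, hjt⟩
    · rintro (⟨hj, hjt⟩ | ⟨⟨hjt, hj⟩, hji⟩)
      · exact ⟨hj, fun hi => hjt (hIT hi)⟩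
      · exact ⟨hj, hji⟩
  · rw [Finset.disjoint_left]
    intro a ha hb
    simp only [Finset.mem_sdiff, Finset.mem_inter] at ha hb
    exact ha.2 hb.1.1

lemma card_split_C (C I T J : Finset ℕ) (hIT : I ⊆ T) (hT : T ⊆ C) :
    (C \ (I ∪ J)).card = (C \ (T ∪ J)).card + ((T \ J) \ I).card := by
  rw [← Finset.card_union_of_disjoint]
  · congr 1
    ext c
    simp only [Finset.mem_sdiff, Finset.mem_union, not_or]
    constructor
    · rintro ⟨hc, hci, hcj⟩
      by_cases hct : c ∈ T
      · exact Or.inr ⟨⟨hct, hcj⟩, hci⟩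
      · exact Or.inl ⟨hc, hct, hcj⟩
    · rintro (⟨hc, hct, hcj⟩ | ⟨⟨hct, hcj⟩, hci⟩)
      · exact ⟨hc, fun hi => hct (hIT hi), hcj⟩
      · exact ⟨hT hct, hci, hcj⟩
  · rw [Finset.disjoint_left]
    intro a ha hb
    simp only [Finset.mem_sdiff, Finset.mem_union, not_or] at ha hb
    exact ha.2.1 hb.1.1

lemma key_sum (ν : ℤ) (hν : 1 < ν) (N : ℕ) (T J : Finset ℕ)
    (hT : T ⊆ Finset.Icc 1 N) (hJ : J ⊆ Finset.Icc 1 N) :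
    ((ν:ℂ) ^ (-(N:ℤ))) * ∑ I ∈ T.powerset,
        ((-1:ℂ) ^ ((J \ I).card) * ((ν:ℂ)-1) ^ ((Finset.Icc 1 N \ (I ∪ J)).card))
      = if T ∩ J = ∅ then
          (1/(1-(ν:ℂ))) ^ J.card * (((ν:ℂ)-1)/(ν:ℂ)) ^ (N - T.card) else 0 := by
  set C := Finset.Icc 1 N with hC
  set x := (ν:ℂ) - 1 with hx
  have hstep : ∑ I ∈ T.powerset, ((-1:ℂ)^((J\I).card) * x ^ ((C \ (I ∪ J)).card))
      = (-1:ℂ)^((J\T).card) * x^((C\(T∪J)).card) *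
        ∑ I ∈ T.powerset, (-1:ℂ) ^ (((T ∩ J) \ I).card) * x ^ (((T \ J) \ I).card) := by
    rw [Finset.mul_sum]
    apply Finset.sum_congr rfl
    intro I hI
    rw [Finset.mem_powerset] at hI
    rw [card_split_J I T J hI, card_split_C C I T J hI hT, pow_add, pow_add]
    ring
  rw [hstep, sum_powerset_weights]
  by_cases hTJ : T ∩ J = ∅
  · rw [if_pos hTJ, if_pos hTJ]
    have hJT : J \ T = J := by
      ext j; simp only [Finset.mem_sdiff]
      constructor
      · exact fun h => h.1
      · intro hj
        refine ⟨hj, fun ht => ?_⟩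
        have : j ∈ T ∩ J := Finset.mem_inter.2 ⟨ht, hj⟩
        simp [hTJ] at this
    have hdisj : Disjoint T J := Finset.disjoint_iff_inter_eq_empty.2 hTJ
    have hsub : T ∪ J ⊆ C := Finset.union_subset hT hJ
    have hcard : T.card + J.card ≤ N := by
      have := Finset.card_le_card hsub
      rwa [Finset.card_union_of_disjoint hdisj, hC, Nat.card_Icc, Nat.add_sub_cancel] at this
    have hCard : (C \ (T ∪ J)).card = N - T.card - J.card := by
      rw [Finset.card_sdiff_of_subset hsub, Finset.card_union_of_disjoint hdisj, hC, Nat.card_Icc,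
        Nat.add_sub_cancel]
      omega
    have h1x : (1:ℂ) + x = (ν:ℂ) := by rw [hx]; ring
    rw [hJT, hCard, h1x]
    have hN : (-(N:ℤ)) = -(((T.card + J.card + (N - T.card - J.card)) : ℕ) : ℤ) := by
      congr 1
      exact_mod_cast (by omega : N = T.card + J.card + (N - T.card - J.card))
    rw [hN]
    have hc := coeff_eq ν hν T.card J.card (N - T.card - J.card)
    rw [show N - T.card - J.card + J.card = N - T.card from by omega] at hc
    exact hc
  · rw [if_neg hTJ, if_neg hTJ, mul_zero, mul_zero]


/-- expansion of `K_{comp(J)}(ν)` in the monomial basis. -/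
theorem statement7 (ν : ℤ) (hν : 1 < ν) (n : ℕ) (hn : 1 ≤ n)
    (J : Finset ℕ) (hJ : J ⊆ Finset.Icc 1 (n - 1)) :
    Kset ℕ (fun _ => True) ν n J =
      ((1 / (1 - (ν : ℂ))) ^ J.card) •
        ∑ I ∈ (Finset.Icc 1 (n - 1)).powerset.filter (fun I => I ∩ J = ∅),
          ((((ν : ℂ) - 1) / (ν : ℂ)) ^ ((n - 1) - I.card)) •
            Mqs ℕ ℂ (fun _ => True) (compOf n I) := by
  classical
  have hfilter : ∀ T ∈ (Finset.Icc 1 (n-1)).powerset,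
      (Finset.Icc 1 (n-1)).powerset.filter (fun I => I ⊆ T) = T.powerset := by
    intro T hT
    rw [Finset.mem_powerset] at hT
    ext I
    simp only [Finset.mem_filter, Finset.mem_powerset]
    exact ⟨fun h => h.2, fun h => ⟨h.trans hT, h⟩⟩
  have hνexp : (ν:ℂ) ^ (-((n:ℤ) - 1)) = (ν:ℂ) ^ (-(((n-1 : ℕ)):ℤ)) := by
    congr 1
    rw [Nat.cast_sub hn]
    simp
  ext d
  simp only [Kset, Lqs, hνexp, map_smul, map_sum, smul_eq_mul, Finset.mul_sum,
    Finset.sum_filter, apply_ite (MvPowerSeries.coeff (R := ℂ) d), map_zero, map_smul,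
    smul_eq_mul, mul_ite, mul_zero]
  rw [Finset.sum_comm]
  refine Finset.sum_congr rfl (fun T hT => ?_)
  rw [← Finset.sum_filter, hfilter T hT]
  have hkey := key_sum ν hν (n-1) T J (Finset.mem_powerset.1 hT) hJ
  set m : ℂ := (MvPowerSeries.coeff (R := ℂ) d) (Mqs ℕ ℂ (fun _ => True) (compOf n T)) with hm
  have hpull : ∑ x ∈ T.powerset,
      (ν:ℂ) ^ (-((n-1:ℕ):ℤ)) *
        ((-1:ℂ) ^ (J \ x).card * ((ν:ℂ) - 1) ^ (Finset.Icc 1 (n - 1) \ (x ∪ J)).card * m)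
      = ((ν:ℂ) ^ (-((n-1:ℕ):ℤ)) * ∑ x ∈ T.powerset,
          (-1:ℂ) ^ (J \ x).card * ((ν:ℂ) - 1) ^ (Finset.Icc 1 (n - 1) \ (x ∪ J)).card) * m := by
    rw [Finset.mul_sum, Finset.sum_mul]
    exact Finset.sum_congr rfl (fun _ _ => by ring)
  rw [hpull, hkey, ite_mul, zero_mul]
  by_cases h : T ∩ J = ∅ <;> simp [h, mul_assoc]


end
end QSymPaper
end

section
/- For every composition α of n: (a) D_α(1,0) = M_α; (b) D_α(−1,1) = (−1)^{n−ℓ(α)} ∑_{β ⪰ α} M_β (the dual elementary quasisymmetric function Λ*_α); (c) D_α(1,−1) = ∑_{β ⪰ α} M_β (Hoffman's essential quasisymmetric function E_α); (d) 2^n · D_α(2,−1) = η_α; (e) (q+1)^n · D_α(q+1,−1) = η_α^{(q)} as quasisymmetric functions over ℂ(q). -/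
namespace QSymPaper

attribute [local instance 0] Classical.propDecidable

noncomputable section

section Aux

variable {σ F : Type} [LinearOrder σ] [CommRing F]

lemma Mqs_nil (σ F : Type) [LinearOrder σ] [CommRing F] (P : σ → Prop) :
    Mqs σ F P [] = 1 := by
  funext d
  have h1 : (1 : MvPowerSeries σ F) d = if d = 0 then 1 else 0 :=
    MvPowerSeries.coeff_one (R := F) d
  rw [h1]
  unfold Mqs
  by_cases hd : d = 0
  · subst hd; simp
  · rw [if_neg, if_neg hd]
    rintro ⟨-, h2⟩
    apply hd
    rw [List.map_eq_nil_iff] at h2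
    have hlen := Finset.length_sort (α := σ) (· ≤ ·) (s := d.support)
    rw [h2, List.length_nil] at hlen
    exact Finsupp.support_eq_empty.mp (Finset.card_eq_zero.mp hlen.symm)

/-- full list of partial sums -/
def psL (α : List ℕ) : List ℕ := (List.range α.length).map (fun j => (α.take (j+1)).sum)

/-- proper list of partial sums -/
def psLp (α : List ℕ) : List ℕ := (List.range (α.length - 1)).map (fun j => (α.take (j+1)).sum)

lemma zip_shift (L : List ℕ) (a x : ℕ) :
    List.zipWith (fun p q => p - q) (L.map (a + ·)) ((a + x) :: L.map (a + ·)) =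
    List.zipWith (fun p q => p - q) L (x :: L) := by
  induction L generalizing x with
  | nil => rfl
  | cons h t ih =>
    simp only [List.map_cons, List.zipWith_cons_cons, Nat.add_sub_add_left]
    rw [ih h]

lemma psL_cons (a : ℕ) (β : List ℕ) : psL (a :: β) = a :: (psL β).map (a + ·) := by
  unfold psL
  rw [List.length_cons, List.range_succ_eq_map, List.map_cons, List.map_map, List.map_map]
  simp [Function.comp, List.take_succ_cons]

lemma recon (α : List ℕ) :
    List.zipWith (fun a b => a - b) (psL α) (0 :: psL α) = α := by
  induction α with
  | nil => rfl
  | cons a β ih =>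
    rw [psL_cons, List.zipWith_cons_cons, Nat.sub_zero]
    have h := zip_shift (psL β) a 0
    rw [Nat.add_zero] at h
    rw [h, ih]

lemma sum_take_lt {α : List ℕ} (hα : IsComp α) {i j : ℕ} (hij : i < j) (hj : j ≤ α.length) :
    (α.take i).sum < (α.take j).sum := by
  have h1 : (α.take j).take i = α.take i := by
    rw [List.take_take, min_eq_left (le_of_lt hij)]
  have h2 : α.take j = α.take i ++ (α.take j).drop i := by
    rw [← h1, List.take_append_drop]
  have hlenj : (α.take j).length = j := by
    rw [List.length_take, min_eq_left hj]
  have hlen : ((α.take j).drop i).length = j - i := by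
    rw [List.length_drop, hlenj]
  have hpos : ∀ b ∈ (α.take j).drop i, 1 ≤ b := by
    intro b hb
    exact hα b (List.mem_of_mem_take (List.mem_of_mem_drop hb))
  have h3 : 1 ≤ ((α.take j).drop i).sum := by
    calc 1 ≤ j - i := by omega
    _ = ((α.take j).drop i).length := hlen.symm
    _ ≤ ((α.take j).drop i).sum := List.length_le_sum_of_one_le _ hpos
  have h4 : (α.take j).sum = (α.take i).sum + ((α.take j).drop i).sum := by
    conv_lhs => rw [h2]
    rw [List.sum_append]
  omega

lemma psLp_pairwise {α : List ℕ} (hα : IsComp α) : (psLp α).Pairwise (· < ·) := by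
  unfold psLp
  rw [List.pairwise_map]
  refine (List.pairwise_lt_range).imp_of_mem ?_
  intro i j hi hj hij
  rw [List.mem_range] at hi hj
  exact sum_take_lt hα (by omega) (by omega)

lemma setComp_eq_toFinset (α : List ℕ) : setComp α = (psLp α).toFinset := by
  ext x
  simp [setComp, psLp, List.mem_map]

lemma sort_setComp {α : List ℕ} (hα : IsComp α) :
    (setComp α).sort (· ≤ ·) = psLp α := by
  rw [setComp_eq_toFinset]
  exact (List.toFinset_sort (· ≤ ·) ((psLp_pairwise hα).nodup)).mpr
    ((psLp_pairwise hα).imp le_of_lt)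

lemma card_setComp {α : List ℕ} (hα : IsComp α) :
    (setComp α).card = α.length - 1 := by
  rw [setComp_eq_toFinset, List.toFinset_card_of_nodup (psLp_pairwise hα).nodup]
  simp [psLp]

lemma length_le_sum {α : List ℕ} (hα : IsComp α) : α.length ≤ α.sum :=
  List.length_le_sum_of_one_le _ (fun i hi => hα i hi)

lemma psL_eq {α : List ℕ} (hne : α ≠ []) : psL α = psLp α ++ [α.sum] := by
  unfold psL psLp
  have hl : α.length = (α.length - 1) + 1 := by
    cases α with
    | nil => exact absurd rfl hne
    | cons a t => simp
  rw [hl, List.range_succ, List.map_append]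
  congr 1
  simp only [List.map_cons, List.map_nil]
  congr 1
  rw [← hl, List.take_of_length_le (le_refl _)]

lemma compOf_setComp {α : List ℕ} (hα : IsComp α) (hne : α ≠ []) :
    compOf α.sum (setComp α) = α := by
  have hn : α.sum ≠ 0 := by
    have h1 : 1 ≤ α.length := List.length_pos_iff.mpr hne
    have := length_le_sum hα
    omega
  unfold compOf
  rw [if_neg hn]
  simp only []
  rw [sort_setComp hα, ← psL_eq hne]
  exact recon α

end Aux


lemma eta_spec (F : Type) [Field F] (P : ℕ → Prop) (c : F) (hc : c ≠ 0) (α : List ℕ)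
    (hne : α ≠ []) :
    (c ^ α.sum) • Dqt ℕ F P c (-1) α = etaQ ℕ F P c α := by
  rw [Dqt, etaQ, if_neg hne, if_neg hne, Finset.smul_sum]
  refine Finset.sum_congr rfl fun T hT => ?_
  rw [smul_smul]
  congr 1
  rw [neg_neg, one_pow, mul_one, ← zpow_natCast c α.sum, ← zpow_add₀ hc,
    ← zpow_natCast c (T.card + 1)]
  congr 1
  push_cast
  ring

/-- specializations of `D_α(q,t)`:
(a) `D_α(1,0) = M_α`; (b) `D_α(−1,1) = Λ*_α`; (c) `D_α(1,−1) = E_α`;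
(d) `2^n D_α(2,−1) = η_α`; (e) `(q+1)^n D_α(q+1,−1) = η_α^{(q)}`. -/
theorem statement8 (α : List ℕ) (hα : IsComp α) :
    Dqt ℕ ℂ (fun _ => True) 1 0 α = Mqs ℕ ℂ (fun _ => True) α ∧
    Dqt ℕ ℂ (fun _ => True) (-1) 1 α =
      ((-1 : ℂ) ^ (α.sum - α.length)) •
        ∑ T ∈ (setComp α).powerset, Mqs ℕ ℂ (fun _ => True) (compOf α.sum T) ∧
    Dqt ℕ ℂ (fun _ => True) 1 (-1) α =
      ∑ T ∈ (setComp α).powerset, Mqs ℕ ℂ (fun _ => True) (compOf α.sum T) ∧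
    ((2 : ℂ) ^ α.sum) • Dqt ℕ ℂ (fun _ => True) 2 (-1) α =
      etaQ ℕ ℂ (fun _ => True) 2 α ∧
    ((RatFunc.X + 1 : RatFunc ℂ) ^ α.sum) •
        Dqt ℕ (RatFunc ℂ) (fun _ => True) (RatFunc.X + 1) (-1) α =
      etaQ ℕ (RatFunc ℂ) (fun _ => True) (RatFunc.X + 1) α := by
  by_cases hne : α = []
  · subst hne
    have hM := Mqs_nil ℕ ℂ (fun _ => True)
    have hM2 := Mqs_nil ℕ (RatFunc ℂ) (fun _ => True)
    have hset : setComp ([] : List ℕ) = ∅ := by simp [setComp]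
    have hcomp : compOf 0 ∅ = [] := by simp [compOf]
    refine ⟨?_, ?_, ?_, ?_, ?_⟩ <;>
      simp [Dqt, etaQ, hset, hcomp, hM, hM2]
  · have hl1 : 1 ≤ α.length := List.length_pos_iff.mpr hne
    have hln : α.length ≤ α.sum := length_le_sum hα
    have hcardS : (setComp α).card = α.length - 1 := card_setComp hα
    have hcard : ∀ T ∈ (setComp α).powerset, T.card + 1 ≤ α.length := by
      intro T hT
      have := Finset.card_le_card (Finset.mem_powerset.mp hT)
      omega
    have hc2 : (2 : ℂ) ≠ 0 := two_ne_zero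
    have hcX : (RatFunc.X + 1 : RatFunc ℂ) ≠ 0 := by
      have hrepr : (RatFunc.X + 1 : RatFunc ℂ) =
          algebraMap (Polynomial ℂ) _ (Polynomial.X + 1) := by
        rw [map_add, map_one, RatFunc.algebraMap_X]
      rw [hrepr]
      apply RatFunc.algebraMap_ne_zero
      intro h
      have := congrArg (Polynomial.eval 0) h
      simp at this
    refine ⟨?_, ?_, ?_, eta_spec ℂ _ 2 hc2 α hne, eta_spec (RatFunc ℂ) _ _ hcX α hne⟩
    · -- (a)
      rw [Dqt, if_neg hne]
      refine (Finset.sum_eq_single_of_mem (setComp α) (Finset.mem_powerset_self _) ?_).trans ?_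
      · intro T hT hTne
        have hsub := Finset.mem_powerset.mp hT
        have hlt : T.card < α.length - 1 := by
          have := Finset.card_lt_card (ssubset_of_subset_of_ne hsub hTne)
          omega
        rw [one_zpow, one_mul, neg_zero, zero_pow (by omega : α.length - (T.card + 1) ≠ 0),
          zero_smul]
      · rw [hcardS, show α.length - ((α.length - 1) + 1) = 0 from by omega, one_zpow, neg_zero,
          pow_zero, one_mul, one_smul, compOf_setComp hα hne]
    · -- (b)
      rw [Dqt, if_neg hne, Finset.smul_sum]
      refine Finset.sum_congr rfl fun T hT => ?_
      congr 1
      have hk := hcard T hT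
      have e1 : (-1 : ℂ) ^ ((T.card + 1 : ℤ) - (α.sum : ℤ)) =
          (-1 : ℂ) ^ (α.sum - (T.card + 1)) := by
        rw [show ((T.card + 1 : ℤ)) - (α.sum : ℤ) = -((α.sum - (T.card + 1) : ℕ) : ℤ) from by
          rw [Nat.cast_sub (le_trans hk hln)]; push_cast; ring]
        rw [zpow_neg, zpow_natCast, ← inv_pow, inv_neg, inv_one]
      rw [e1, ← pow_add,
        show (α.sum - (T.card + 1)) + (α.length - (T.card + 1)) =
          (α.sum - α.length) + 2 * (α.length - (T.card + 1)) from by omega,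
        pow_add, pow_mul, neg_one_sq, one_pow, mul_one]
    · -- (c)
      rw [Dqt, if_neg hne]
      refine Finset.sum_congr rfl fun T hT => ?_
      rw [one_zpow, neg_neg, one_pow, one_mul, one_smul]


end
end QSymPaper
end

section
/- Let α be a composition of n ≥ 1 and let ν > 1 be an integer. Then D_{α∁}(−ν, ν−1) = K_α(ν) as quasisymmetric functions over ℂ, where α∁ := comp([n−1] ∖ set(α)); explicitly, ∑_{β ⪰ α∁} (−ν)^{ℓ(β)−n} (1−ν)^{ℓ(α∁)−ℓ(β)} M_β = K_α(ν). -/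
namespace QSymPaper

attribute [local instance 0] Classical.propDecidable

noncomputable section

lemma prefixSum (l : List ℕ) : ∀ (b k : ℕ), List.Chain (· ≤ ·) b l → k ≤ l.length →
    b + ((List.zipWith (fun a c => a - c) l (b :: l)).take k).sum = (b :: l).getD k 0 := by
  induction l with
  | nil =>
    intro b k _ hk
    simp only [List.length_nil, Nat.le_zero] at hk
    subst hk
    simp
  | cons a l ih =>
    intro b k hc hk
    rcases List.chain_cons.mp hc with ⟨hba, hc'⟩
    match k with
    | 0 => simp
    | (k+1) =>
      have H := ih a k hc' (by simpa using hk)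
      rw [List.zipWith_cons_cons, List.take_succ_cons, List.sum_cons,
        List.getD_cons_succ]
      omega

variable {n : ℕ} {S : Finset ℕ}

lemma chain0 (hS : S ⊆ Finset.Icc 1 (n-1)) (hn : 1 ≤ n) :
    List.Chain (· ≤ ·) 0 (S.sort (· ≤ ·) ++ [n]) := by
  show List.IsChain _ (0 :: _)
  rw [List.isChain_iff_pairwise]
  have hs : List.Pairwise (· ≤ ·) (S.sort (· ≤ ·)) := Finset.pairwise_sort _ _
  have hmem : ∀ x ∈ S.sort (· ≤ ·), x ≤ n := by
    intro x hx
    have := hS ((Finset.mem_sort _).mp hx)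
    simp only [Finset.mem_Icc] at this
    omega
  constructor
  · intro x hx; omega
  · rw [List.pairwise_append]
    exact ⟨hs, List.pairwise_singleton _ _, fun x hx y hy => by
      simp at hy; subst hy; exact hmem x hx⟩

lemma compOf_eq (hn : 1 ≤ n) : compOf n S =
    List.zipWith (fun a c => a - c) (S.sort (· ≤ ·) ++ [n]) (0 :: (S.sort (· ≤ ·) ++ [n])) := by
  unfold compOf; rw [if_neg (by omega)]

lemma compOf_length (hn : 1 ≤ n) : (compOf n S).length = S.card + 1 := by
  rw [compOf_eq hn, List.length_zipWith]
  simp [Finset.length_sort]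

lemma compOf_take (hS : S ⊆ Finset.Icc 1 (n-1)) (hn : 1 ≤ n) (k : ℕ) (hk : k ≤ S.card + 1) :
    ((compOf n S).take k).sum = (0 :: (S.sort (· ≤ ·) ++ [n])).getD k 0 := by
  rw [compOf_eq hn]
  have := prefixSum (S.sort (· ≤ ·) ++ [n]) 0 k (chain0 hS hn) (by simp [Finset.length_sort]; omega)
  omega

lemma compOf_sum (hS : S ⊆ Finset.Icc 1 (n-1)) (hn : 1 ≤ n) : (compOf n S).sum = n := by
  have hlen := compOf_length (S := S) hn
  have := compOf_take hS hn (S.card + 1) le_rfl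
  rw [← hlen, List.take_length] at this
  rw [this, hlen, List.getD_cons_succ,
    List.getD_append_right _ _ _ _ (by simp [Finset.length_sort])]
  simp [Finset.length_sort]

lemma compOf_setComp_s9 (hS : S ⊆ Finset.Icc 1 (n-1)) (hn : 1 ≤ n) : setComp (compOf n S) = S := by
  unfold setComp
  rw [compOf_length hn]
  simp only [Nat.add_sub_cancel]
  ext x
  simp only [Finset.mem_image, Finset.mem_range]
  constructor
  · rintro ⟨j, hj, rfl⟩
    rw [compOf_take hS hn (j+1) (by omega), List.getD_cons_succ,
      List.getD_append _ _ _ _ (by simp [Finset.length_sort]; omega)]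
    have : (S.sort (· ≤ ·)).getD j 0 ∈ S.sort (· ≤ ·) := by
      rw [List.getD_eq_getElem _ _ (by simp [Finset.length_sort]; omega)]
      exact List.getElem_mem _
    exact (Finset.mem_sort _).mp this
  · intro hx
    have : x ∈ S.sort (· ≤ ·) := (Finset.mem_sort _).mpr hx
    rw [List.mem_iff_getElem] at this
    obtain ⟨j, hj, hje⟩ := this
    have hj' : j < S.card := by simpa [Finset.length_sort] using hj
    refine ⟨j, hj', ?_⟩
    rw [compOf_take hS hn (j+1) (by omega), List.getD_cons_succ,
      List.getD_append _ _ _ _ (by simp [Finset.length_sort]; omega),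
      List.getD_eq_getElem _ _ hj, hje]

lemma compOf_ne_nil (hn : 1 ≤ n) : compOf n S ≠ [] := by
  have := compOf_length (S := S) hn
  intro h; rw [h] at this; simp at this

lemma card_split1 {J T I : Finset ℕ} (hIT : I ⊆ T) :
    J \ I = (J \ T) ∪ ((T \ I) ∩ J) := by
  ext x
  have hx : x ∈ I → x ∈ T := fun h => hIT h
  simp only [Finset.mem_sdiff, Finset.mem_union, Finset.mem_inter]
  tauto

lemma card_split2 {N J T I : Finset ℕ} (hIT : I ⊆ T) (hTN : T ⊆ N) :
    N \ (I ∪ J) = (N \ (T ∪ J)) ∪ ((T \ I) \ J) := by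
  ext x
  have hx : x ∈ I → x ∈ T := fun h => hIT h
  have hx2 : x ∈ T → x ∈ N := fun h => hTN h
  simp only [Finset.mem_sdiff, Finset.mem_union]
  tauto

lemma coeff_inner (ν : ℂ) {N J T : Finset ℕ} (hJ : J ⊆ N) (hT : T ⊆ N) :
    ∑ I ∈ T.powerset, ((-1:ℂ)^((J\I).card) * (ν-1)^((N \ (I ∪ J)).card))
      = (-1:ℂ)^((J\T).card) * (ν-1)^((N\(T∪J)).card) *
        ∏ i ∈ T, (if i ∈ J then (0:ℂ) else ν) := by
  have h1 : ∀ i : ℕ, (if i ∈ J then (0:ℂ) else ν)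
      = (1 : ℂ) + (if i ∈ J then (-1:ℂ) else ν - 1) := by
    intro i; split <;> ring
  rw [Finset.prod_congr rfl (fun i _ => h1 i), Finset.prod_add, Finset.mul_sum]
  apply Finset.sum_congr rfl
  intro I hI
  have hIT : I ⊆ T := Finset.mem_powerset.mp hI
  rw [Finset.prod_const_one, one_mul, Finset.prod_ite, Finset.prod_const, Finset.prod_const]
  have e1 : Finset.filter (fun i => i ∈ J) (T \ I) = (T \ I) ∩ J :=
    Finset.filter_mem_eq_inter
  have e2 : Finset.filter (fun i => ¬ i ∈ J) (T \ I) = (T \ I) \ J := by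
    ext x; simp only [Finset.mem_filter, Finset.mem_sdiff]
  rw [e1, e2]
  have d1 : Disjoint (J \ T) ((T \ I) ∩ J) := by
    rw [Finset.disjoint_left]
    intro x hx1 hx2
    simp only [Finset.mem_sdiff, Finset.mem_inter] at *
    tauto
  have d2 : Disjoint (N \ (T ∪ J)) ((T \ I) \ J) := by
    rw [Finset.disjoint_left]
    intro x hx1 hx2
    have := @hT x
    simp only [Finset.mem_sdiff, Finset.mem_union] at *
    tauto
  rw [card_split1 (J := J) hIT, card_split2 (N := N) (J := J) hIT hT,
    Finset.card_union_of_disjoint d1, Finset.card_union_of_disjoint d2,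
    pow_add, pow_add]
  ring

lemma sign_pow (j m : ℕ) : ((-1:ℂ))^j * (-1)^(j+m) = (-1)^m := by
  rw [← pow_add, show j + (j+m) = 2*j + m by ring, pow_add, pow_mul, neg_one_sq, one_pow, one_mul]

lemma scalar_id (ν : ℂ) (hν : ν ≠ 0) (j k m n : ℕ) (hn : (n:ℤ) = j + k + m + 1) :
    (-ν) ^ (((k:ℤ)+1) - n) * (-(ν-1))^m
      = ν ^ (-((n:ℤ)-1)) * ((-1:ℂ)^j * ((ν-1)^m * ν^k)) := by
  have h1 : ((k:ℤ)+1) - n = -((j:ℕ) + (m:ℕ) : ℕ) := by push_cast; omega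
  have h2 : -((n:ℤ)-1) = -((j + k + m : ℕ) : ℤ) := by push_cast; omega
  rw [h1, h2, zpow_neg, zpow_neg, zpow_natCast, zpow_natCast]
  have hν' : (-ν) ≠ 0 := neg_ne_zero.mpr hν
  field_simp
  rw [neg_pow (ν-1), neg_pow ν, ← sign_pow j m]
  ring


theorem key (ν : ℤ) (hν : 1 < ν) (n : ℕ) (hn : 1 ≤ n) (N J : Finset ℕ)
    (hN : N = Finset.Icc 1 (n - 1)) (hJ : J ⊆ N) :
    Dqt ℕ ℂ (fun _ => True) (-(ν : ℂ)) ((ν : ℂ) - 1) (compOf n (N \ J)) =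
      Kset ℕ (fun _ => True) ν n J := by
  have hJcN : N \ J ⊆ N := Finset.sdiff_subset
  have hJc' : N \ J ⊆ Finset.Icc 1 (n - 1) := hN ▸ hJcN
  have hJ' : J ⊆ Finset.Icc 1 (n - 1) := hN ▸ hJ
  have hγset : setComp (compOf n (N \ J)) = N \ J := compOf_setComp_s9 hJc' hn
  have hγsum : (compOf n (N \ J)).sum = n := compOf_sum hJc' hn
  have hγlen : (compOf n (N \ J)).length = (N \ J).card + 1 := compOf_length hn
  have hν0 : ((ν : ℂ)) ≠ 0 := Int.cast_ne_zero.mpr (by omega)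
  have hNcard : N.card = n - 1 := by rw [hN]; simp [Nat.card_Icc]
  have hK : Kset ℕ (fun _ => True) ν n J
      = ∑ T ∈ N.powerset, (((ν : ℂ) ^ (-((n : ℤ) - 1))) *
          ((-1 : ℂ) ^ ((J \ T).card) * ((ν : ℂ) - 1) ^ ((N \ (T ∪ J)).card) *
            ∏ i ∈ T, (if i ∈ J then (0 : ℂ) else (ν : ℂ)))) •
          Mqs ℕ ℂ (fun _ => True) (compOf n T) := by
    rw [Kset, ← hN, Finset.smul_sum]
    have step1 : ∀ I : Finset ℕ, (Lqs ℕ ℂ (fun _ => True) n I)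
        = ∑ T ∈ N.powerset, if I ⊆ T then Mqs ℕ ℂ (fun _ => True) (compOf n T) else 0 := by
      intro I; rw [Lqs, ← hN, Finset.sum_filter]
    simp only [step1, Finset.smul_sum, smul_ite, smul_zero]
    rw [Finset.sum_comm]
    refine Finset.sum_congr rfl fun T hT => ?_
    have hTN : T ⊆ N := Finset.mem_powerset.mp hT
    rw [← Finset.sum_filter]
    have hfil : N.powerset.filter (fun I => I ⊆ T) = T.powerset := by
      ext I; simp only [Finset.mem_filter, Finset.mem_powerset]
      exact ⟨fun h => h.2, fun h => ⟨h.trans hTN, h⟩⟩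
    rw [hfil]
    simp only [smul_smul]
    rw [← Finset.sum_smul]
    congr 1
    rw [← Finset.mul_sum]
    congr 1
    exact coeff_inner (ν : ℂ) hJ hTN
  rw [Dqt, if_neg (compOf_ne_nil hn), hγset, hγsum, hγlen, hK]
  rw [← Finset.sum_subset (Finset.powerset_mono.mpr hJcN) ?_]
  · refine Finset.sum_congr rfl fun T hT => ?_
    have hTJc : T ⊆ N \ J := Finset.mem_powerset.mp hT
    have hTN : T ⊆ N := hTJc.trans hJcN
    have hdisj : Disjoint J T := by
      rw [Finset.disjoint_left]; intro x hxJ hxT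
      have := hTJc hxT; simp only [Finset.mem_sdiff] at this; exact this.2 hxJ
    have hprod : (∏ i ∈ T, (if i ∈ J then (0 : ℂ) else (ν : ℂ))) = (ν : ℂ) ^ T.card := by
      rw [Finset.prod_congr rfl (fun i hi => if_neg (fun h => ?_)), Finset.prod_const]
      exact (Finset.disjoint_right.mp hdisj hi) h
    have hJT : J \ T = J := Finset.sdiff_eq_self_iff_disjoint.mpr hdisj
    have hNTJ : N \ (T ∪ J) = (N \ J) \ T := by
      ext x
      simp only [Finset.mem_sdiff, Finset.mem_union]
      tauto
    congr 1
    rw [hprod, hJT, hNTJ, Finset.card_sdiff_of_subset hTJc]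
    have hk : T.card ≤ (N \ J).card := Finset.card_le_card hTJc
    have hjc : J.card ≤ N.card := Finset.card_le_card hJ
    have hcs : (N \ J).card = N.card - J.card := Finset.card_sdiff_of_subset hJ
    rw [show (N \ J).card + 1 - (T.card + 1) = (N \ J).card - T.card by omega]
    rw [scalar_id (ν : ℂ) hν0 J.card T.card ((N \ J).card - T.card) n (by push_cast; omega)]
    ring
  · intro T hT hT'
    have hTN : T ⊆ N := Finset.mem_powerset.mp hT
    have : ¬ T ⊆ N \ J := fun h => hT' (Finset.mem_powerset.mpr h)
    obtain ⟨x, hxT, hx⟩ := Finset.not_subset.mp this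
    have hxJ : x ∈ J := by
      have := hTN hxT
      by_contra hc
      exact hx (Finset.mem_sdiff.mpr ⟨this, hc⟩)
    have : (∏ i ∈ T, (if i ∈ J then (0 : ℂ) else (ν : ℂ))) = 0 :=
      Finset.prod_eq_zero hxT (if_pos hxJ)
    rw [this, mul_zero, mul_zero, zero_smul]


lemma setComp_subset {α : List ℕ} (hα : IsComp α) (hn : 1 ≤ α.sum) :
    setComp α ⊆ Finset.Icc 1 (α.sum - 1) := by
  intro x hx
  simp only [setComp, Finset.mem_image, Finset.mem_range] at hx
  obtain ⟨j, hj, rfl⟩ := hx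
  have hlen : j + 1 < α.length := by omega
  have htne : α.take (j+1) ≠ [] := by
    apply List.length_pos_iff.mp
    rw [List.length_take]; omega
  have hdne : α.drop (j+1) ≠ [] := by
    apply List.length_pos_iff.mp
    rw [List.length_drop]; omega
  have h1 : 0 < (α.take (j+1)).sum :=
    List.sum_pos _ (fun x hx => hα x (List.mem_of_mem_take hx)) htne
  have h2 : 0 < (α.drop (j+1)).sum :=
    List.sum_pos _ (fun x hx => hα x (List.mem_of_mem_drop hx)) hdne
  have h3 : (α.take (j+1)).sum + (α.drop (j+1)).sum = α.sum := by
    rw [← List.sum_append, List.take_append_drop]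
  simp only [Finset.mem_Icc]; omega


/-- `D_{α∁}(−ν, ν−1) = K_α(ν)`. -/
theorem statement9 (ν : ℤ) (hν : 1 < ν) (α : List ℕ) (hα : IsComp α)
    (hn : 1 ≤ α.sum) :
    Dqt ℕ ℂ (fun _ => True) (-(ν : ℂ)) ((ν : ℂ) - 1)
        (compOf α.sum (Finset.Icc 1 (α.sum - 1) \ setComp α)) =
      Kset ℕ (fun _ => True) ν α.sum (setComp α) :=
  key ν hν α.sum hn (Finset.Icc 1 (α.sum - 1)) (setComp α) rfl (setComp_subset hα hn)

end
end QSymPaper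
end
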